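/- arXiv:0811.2514 — 4 statements merged into one kernel-verified Lean document; each statement's English description precedes it below -/
import Mathlib

section
/- Let G₁ and G₂ be finite simple graphs on finite vertex sets V₁ and V₂, let G be their disjoint union on V₁ ⊕ V₂, and let k be a field. Under the canonical bijection k^{E(G)} ≅ k^{E(G₁)} × k^{E(G₂)} (coming from the identification E(G) ≅ E(G₁) ⊕ E(G₂)), the complement of the affine graph hypersurface of G is identified with the product of the complements: k^{E(G)} ∖ X̂_G corresponds exactly to (k^{E(G₁)} ∖ X̂_{G₁}) × (k^{E(G₂)} ∖ X̂_{G₂}). -/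
open scoped Classical
noncomputable section

open MvPolynomial

/-- A spanning forest of a simple graph `G`: a subset of the edge set that is maximal
among subsets of the edge set whose associated spanning subgraph is acyclic. -/
def SimpleGraph.IsSpanningForest {V : Type*} (G : SimpleGraph V) (T : Set (Sym2 V)) : Prop :=
  T ⊆ G.edgeSet ∧ (SimpleGraph.fromEdgeSet T).IsAcyclic ∧
    ∀ T' : Set (Sym2 V), T ⊆ T' → T' ⊆ G.edgeSet →
      (SimpleGraph.fromEdgeSet T').IsAcyclic → T' = T

/-- The Kirchhoff–Symanzik polynomial of a finite simple graph `G`: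
`Ψ_G = ∑_T ∏_{e ∉ T} x_e`, the sum over spanning forests `T` of `G`. -/
def SimpleGraph.kirchhoff {V : Type*} [Fintype V] (G : SimpleGraph V) :
    MvPolynomial G.edgeSet ℤ :=
  ∑ T ∈ Finset.univ.filter (fun T : Finset (Sym2 V) => G.IsSpanningForest ↑T),
    ∏ e ∈ Finset.univ.filter (fun e : G.edgeSet => (e : Sym2 V) ∉ T), X e

/-- The affine graph hypersurface `X̂_G ⊆ k^{E(G)}`. -/
def SimpleGraph.graphHypersurface {V : Type*} [Fintype V] (G : SimpleGraph V)
    (k : Type*) [CommRing k] : Set (G.edgeSet → k) :=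
  {t | (MvPolynomial.aeval t) G.kirchhoff = 0}

/-- The complement `k^{E(G)} ∖ X̂_G` of the affine graph hypersurface. -/
def SimpleGraph.graphHypersurfaceComplement {V : Type*} [Fintype V] (G : SimpleGraph V)
    (k : Type*) [CommRing k] : Set (G.edgeSet → k) :=
  {t | (MvPolynomial.aeval t) G.kirchhoff ≠ 0}

/-- The disjoint union of two simple graphs. -/
def SimpleGraph.disjUnion {V₁ V₂ : Type*} (G₁ : SimpleGraph V₁) (G₂ : SimpleGraph V₂) :
    SimpleGraph (V₁ ⊕ V₂) where
  Adj x y := (∃ a b, x = Sum.inl a ∧ y = Sum.inl b ∧ G₁.Adj a b) ∨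
             (∃ a b, x = Sum.inr a ∧ y = Sum.inr b ∧ G₂.Adj a b)
  symm := by
    constructor
    rintro x y (⟨a, b, rfl, rfl, h⟩ | ⟨a, b, rfl, rfl, h⟩)
    · exact Or.inl ⟨b, a, rfl, rfl, h.symm⟩
    · exact Or.inr ⟨b, a, rfl, rfl, h.symm⟩
  loopless := by
    constructor
    rintro x (⟨a, b, rfl, hab, h⟩ | ⟨a, b, rfl, hab, h⟩) <;>
      · cases hab
        exact (h.ne rfl).elim

lemma SimpleGraph.disjUnion_mem_inl {V₁ V₂ : Type*} {G₁ : SimpleGraph V₁}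
    {G₂ : SimpleGraph V₂} {e : Sym2 V₁} (he : e ∈ G₁.edgeSet) :
    e.map Sum.inl ∈ (G₁.disjUnion G₂).edgeSet := by
  induction e using Sym2.ind with
  | _ a b => exact Or.inl ⟨a, b, rfl, rfl, he⟩

lemma SimpleGraph.disjUnion_mem_inr {V₁ V₂ : Type*} {G₁ : SimpleGraph V₁}
    {G₂ : SimpleGraph V₂} {e : Sym2 V₂} (he : e ∈ G₂.edgeSet) :
    e.map Sum.inr ∈ (G₁.disjUnion G₂).edgeSet := by
  induction e using Sym2.ind with
  | _ a b => exact Or.inr ⟨a, b, rfl, rfl, he⟩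

/-- The canonical inclusion `E(G₁) ↪ E(G₁ ⊔ G₂)`. -/
def SimpleGraph.disjUnionEdgeInl {V₁ V₂ : Type*} (G₁ : SimpleGraph V₁) (G₂ : SimpleGraph V₂) :
    G₁.edgeSet → (G₁.disjUnion G₂).edgeSet :=
  fun e => ⟨(e : Sym2 V₁).map Sum.inl, SimpleGraph.disjUnion_mem_inl e.2⟩

/-- The canonical inclusion `E(G₂) ↪ E(G₁ ⊔ G₂)`. -/
def SimpleGraph.disjUnionEdgeInr {V₁ V₂ : Type*} (G₁ : SimpleGraph V₁) (G₂ : SimpleGraph V₂) :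
    G₂.edgeSet → (G₁.disjUnion G₂).edgeSet :=
  fun e => ⟨(e : Sym2 V₂).map Sum.inr, SimpleGraph.disjUnion_mem_inr e.2⟩

section Aux

variable {V₁ V₂ : Type*}

lemma aux_map_inl_ne_map_inr (e₁ : Sym2 V₁) (e₂ : Sym2 V₂) :
    Sym2.map Sum.inl e₁ ≠ Sym2.map (Sum.inr : V₂ → V₁ ⊕ V₂) e₂ := by
  induction e₁ using Sym2.ind with
  | _ a b =>
    intro h
    have : (Sum.inl a : V₁ ⊕ V₂) ∈ Sym2.map Sum.inr e₂ := by
      rw [← h]; simp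
    rw [Sym2.mem_map] at this
    obtain ⟨c, _, hc⟩ := this
    exact Sum.inl_ne_inr hc.symm

lemma aux_mem_union_inl {T₁ : Set (Sym2 V₁)} {T₂ : Set (Sym2 V₂)} {e : Sym2 V₁} :
    Sym2.map Sum.inl e ∈ Sym2.map Sum.inl '' T₁ ∪ Sym2.map (Sum.inr : V₂ → V₁ ⊕ V₂) '' T₂ ↔
      e ∈ T₁ := by
  constructor
  · rintro (⟨e', he', heq⟩ | ⟨e', he', heq⟩)
    · rwa [← Sym2.map.injective Sum.inl_injective heq]
    · exact absurd heq.symm (aux_map_inl_ne_map_inr e e')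
  · intro h; exact Or.inl ⟨e, h, rfl⟩

lemma aux_mem_union_inr {T₁ : Set (Sym2 V₁)} {T₂ : Set (Sym2 V₂)} {e : Sym2 V₂} :
    Sym2.map (Sum.inr : V₂ → V₁ ⊕ V₂) e ∈ Sym2.map Sum.inl '' T₁ ∪ Sym2.map Sum.inr '' T₂ ↔
      e ∈ T₂ := by
  constructor
  · rintro (⟨e', he', heq⟩ | ⟨e', he', heq⟩)
    · exact absurd heq (aux_map_inl_ne_map_inr e' e)
    · rwa [← Sym2.map.injective Sum.inr_injective heq]
  · intro h; exact Or.inr ⟨e, h, rfl⟩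

end Aux

section Acyclic

variable {V₁ V₂ : Type*} {T₁ : Set (Sym2 V₁)} {T₂ : Set (Sym2 V₂)}

/-- The inl homomorphism into the union edge graph. -/
def auxHomL (T₁ : Set (Sym2 V₁)) (T₂ : Set (Sym2 V₂)) :
    SimpleGraph.fromEdgeSet T₁ →g
      SimpleGraph.fromEdgeSet (Sym2.map Sum.inl '' T₁ ∪ Sym2.map (Sum.inr : V₂ → V₁ ⊕ V₂) '' T₂) where
  toFun := Sum.inl
  map_rel' := by
    intro a b hab
    rw [SimpleGraph.fromEdgeSet_adj] at hab ⊢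
    refine ⟨?_, by simpa using hab.2⟩
    have : s(Sum.inl a, (Sum.inl b : V₁ ⊕ V₂)) = Sym2.map Sum.inl s(a, b) := by simp
    rw [this, aux_mem_union_inl]
    exact hab.1

def auxHomR (T₁ : Set (Sym2 V₁)) (T₂ : Set (Sym2 V₂)) :
    SimpleGraph.fromEdgeSet T₂ →g
      SimpleGraph.fromEdgeSet (Sym2.map Sum.inl '' T₁ ∪ Sym2.map (Sum.inr : V₂ → V₁ ⊕ V₂) '' T₂) where
  toFun := Sum.inr
  map_rel' := by
    intro a b hab
    rw [SimpleGraph.fromEdgeSet_adj] at hab ⊢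
    refine ⟨?_, by simpa using hab.2⟩
    have : s((Sum.inr a : V₁ ⊕ V₂), Sum.inr b) = Sym2.map Sum.inr s(a, b) := by simp
    rw [this, aux_mem_union_inr]
    exact hab.1

lemma aux_adjS_inl {a : V₁} {x : V₁ ⊕ V₂}
    (h : (SimpleGraph.fromEdgeSet (Sym2.map Sum.inl '' T₁ ∪ Sym2.map (Sum.inr : V₂ → V₁ ⊕ V₂) '' T₂)).Adj
      (Sum.inl a) x) :
    ∃ b, x = Sum.inl b ∧ (SimpleGraph.fromEdgeSet T₁).Adj a b := by
  rw [SimpleGraph.fromEdgeSet_adj] at h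
  obtain ⟨hmem, hne⟩ := h
  rcases hmem with ⟨e, he, heq⟩ | ⟨e, he, heq⟩
  · have hx : x ∈ Sym2.map (Sum.inl : V₁ → V₁ ⊕ V₂) e := by rw [heq]; simp
    rw [Sym2.mem_map] at hx
    obtain ⟨b, hb, rfl⟩ := hx
    refine ⟨b, rfl, ?_⟩
    rw [SimpleGraph.fromEdgeSet_adj]
    have : Sym2.map (Sum.inl : V₁ → V₁ ⊕ V₂) s(a, b) = Sym2.map Sum.inl e := by
      simpa using heq.symm
    have := Sym2.map.injective Sum.inl_injective this
    refine ⟨this ▸ he, ?_⟩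
    rintro rfl; exact hne rfl
  · exfalso
    have : (Sum.inl a : V₁ ⊕ V₂) ∈ Sym2.map Sum.inr e := by rw [heq]; simp
    rw [Sym2.mem_map] at this
    obtain ⟨c, _, hc⟩ := this
    exact Sum.inl_ne_inr hc.symm

lemma aux_adjS_inr {a : V₂} {x : V₁ ⊕ V₂}
    (h : (SimpleGraph.fromEdgeSet (Sym2.map Sum.inl '' T₁ ∪ Sym2.map (Sum.inr : V₂ → V₁ ⊕ V₂) '' T₂)).Adj
      (Sum.inr a) x) :
    ∃ b, x = Sum.inr b ∧ (SimpleGraph.fromEdgeSet T₂).Adj a b := by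
  rw [SimpleGraph.fromEdgeSet_adj] at h
  obtain ⟨hmem, hne⟩ := h
  rcases hmem with ⟨e, he, heq⟩ | ⟨e, he, heq⟩
  · exfalso
    have : (Sum.inr a : V₁ ⊕ V₂) ∈ Sym2.map Sum.inl e := by rw [heq]; simp
    rw [Sym2.mem_map] at this
    obtain ⟨c, _, hc⟩ := this
    exact Sum.inl_ne_inr hc
  · have hx : x ∈ Sym2.map (Sum.inr : V₂ → V₁ ⊕ V₂) e := by rw [heq]; simp
    rw [Sym2.mem_map] at hx
    obtain ⟨b, hb, rfl⟩ := hx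
    refine ⟨b, rfl, ?_⟩
    rw [SimpleGraph.fromEdgeSet_adj]
    have : Sym2.map (Sum.inr : V₂ → V₁ ⊕ V₂) s(a, b) = Sym2.map Sum.inr e := by
      simpa using heq.symm
    have := Sym2.map.injective Sum.inr_injective this
    refine ⟨this ▸ he, ?_⟩
    rintro rfl; exact hne rfl

end Acyclic

section Acyclic2

variable {V₁ V₂ : Type*} {T₁ : Set (Sym2 V₁)} {T₂ : Set (Sym2 V₂)}

lemma aux_walk_pull_inl :
    ∀ {x y : V₁ ⊕ V₂}
      (p : (SimpleGraph.fromEdgeSet (Sym2.map Sum.inl '' T₁ ∪ Sym2.map (Sum.inr : V₂ → V₁ ⊕ V₂) '' T₂)).Walk x y)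
      (a b : V₁) (hx : x = Sum.inl a) (hy : y = Sum.inl b),
      ∃ q : (SimpleGraph.fromEdgeSet T₁).Walk a b,
        q.map (auxHomL T₁ T₂) = p.copy hx hy := by
  intro x y p
  induction p with
  | nil =>
    intro a b hx hy
    subst hx
    obtain rfl : a = b := Sum.inl_injective hy
    exact ⟨SimpleGraph.Walk.nil, by simp; rfl⟩
  | cons h p ih =>
    intro a b hx hy
    subst hx
    obtain ⟨c, rfl, hac⟩ := aux_adjS_inl h
    obtain ⟨q, hq⟩ := ih c b rfl hy
    refine ⟨SimpleGraph.Walk.cons hac q, ?_⟩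
    simp only [SimpleGraph.Walk.map_cons, hq, SimpleGraph.Walk.copy_cons]
    rfl

lemma aux_walk_pull_inr :
    ∀ {x y : V₁ ⊕ V₂}
      (p : (SimpleGraph.fromEdgeSet (Sym2.map Sum.inl '' T₁ ∪ Sym2.map (Sum.inr : V₂ → V₁ ⊕ V₂) '' T₂)).Walk x y)
      (a b : V₂) (hx : x = Sum.inr a) (hy : y = Sum.inr b),
      ∃ q : (SimpleGraph.fromEdgeSet T₂).Walk a b,
        q.map (auxHomR T₁ T₂) = p.copy hx hy := by
  intro x y p
  induction p with
  | nil =>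
    intro a b hx hy
    subst hx
    obtain rfl : a = b := Sum.inr_injective hy
    exact ⟨SimpleGraph.Walk.nil, by simp; rfl⟩
  | cons h p ih =>
    intro a b hx hy
    subst hx
    obtain ⟨c, rfl, hac⟩ := aux_adjS_inr h
    obtain ⟨q, hq⟩ := ih c b rfl hy
    refine ⟨SimpleGraph.Walk.cons hac q, ?_⟩
    simp only [SimpleGraph.Walk.map_cons, hq, SimpleGraph.Walk.copy_cons]
    rfl

lemma aux_acyclic_union_iff :
    (SimpleGraph.fromEdgeSet (Sym2.map Sum.inl '' T₁ ∪ Sym2.map (Sum.inr : V₂ → V₁ ⊕ V₂) '' T₂)).IsAcyclic ↔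
      (SimpleGraph.fromEdgeSet T₁).IsAcyclic ∧ (SimpleGraph.fromEdgeSet T₂).IsAcyclic := by
  constructor
  · intro h
    constructor
    · intro a q hq
      exact h (q.map (auxHomL T₁ T₂)) (hq.map Sum.inl_injective)
    · intro a q hq
      exact h (q.map (auxHomR T₁ T₂)) (hq.map Sum.inr_injective)
  · rintro ⟨h₁, h₂⟩ x p hp
    match x, p, hp with
    | Sum.inl a, p, hp =>
      obtain ⟨q, hq⟩ := aux_walk_pull_inl p a a rfl rfl
      rw [SimpleGraph.Walk.copy_rfl_rfl] at hq
      apply h₁ q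
      rw [← SimpleGraph.Walk.map_isCycle_iff_of_injective (f := auxHomL T₁ T₂) Sum.inl_injective,
        hq]
      exact hp
    | Sum.inr a, p, hp =>
      obtain ⟨q, hq⟩ := aux_walk_pull_inr p a a rfl rfl
      rw [SimpleGraph.Walk.copy_rfl_rfl] at hq
      apply h₂ q
      rw [← SimpleGraph.Walk.map_isCycle_iff_of_injective (f := auxHomR T₁ T₂) Sum.inr_injective,
        hq]
      exact hp

end Acyclic2



section DisjUnion

variable {V₁ V₂ : Type*} {G₁ : SimpleGraph V₁} {G₂ : SimpleGraph V₂}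

lemma aux_disjUnion_adj_inl {a b : V₁} :
    (G₁.disjUnion G₂).Adj (Sum.inl a) (Sum.inl b) ↔ G₁.Adj a b := by
  simp [SimpleGraph.disjUnion]

lemma aux_disjUnion_adj_inr {a b : V₂} :
    (G₁.disjUnion G₂).Adj (Sum.inr a) (Sum.inr b) ↔ G₂.Adj a b := by
  simp [SimpleGraph.disjUnion]

lemma aux_mem_edgeSet_disjUnion {e : Sym2 (V₁ ⊕ V₂)} (he : e ∈ (G₁.disjUnion G₂).edgeSet) :
    (∃ e₁ ∈ G₁.edgeSet, e = Sym2.map Sum.inl e₁) ∨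
      (∃ e₂ ∈ G₂.edgeSet, e = Sym2.map Sum.inr e₂) := by
  induction e using Sym2.ind with
  | _ x y =>
    rcases he with ⟨a, b, rfl, rfl, h⟩ | ⟨a, b, rfl, rfl, h⟩
    · exact Or.inl ⟨s(a, b), h, by simp⟩
    · exact Or.inr ⟨s(a, b), h, by simp⟩

lemma aux_subset_decomp {T : Set (Sym2 (V₁ ⊕ V₂))} (hT : T ⊆ (G₁.disjUnion G₂).edgeSet) :
    T = Sym2.map Sum.inl '' (Sym2.map Sum.inl ⁻¹' T) ∪
        Sym2.map Sum.inr '' (Sym2.map Sum.inr ⁻¹' T) := by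
  ext e
  constructor
  · intro he
    rcases aux_mem_edgeSet_disjUnion (hT he) with ⟨e₁, _, rfl⟩ | ⟨e₂, _, rfl⟩
    · exact Or.inl ⟨e₁, he, rfl⟩
    · exact Or.inr ⟨e₂, he, rfl⟩
  · rintro (⟨e₁, he₁, rfl⟩ | ⟨e₂, he₂, rfl⟩) <;> exact ‹_›

lemma aux_union_subset_iff {T₁ : Set (Sym2 V₁)} {T₂ : Set (Sym2 V₂)} :
    Sym2.map Sum.inl '' T₁ ∪ Sym2.map Sum.inr '' T₂ ⊆ (G₁.disjUnion G₂).edgeSet ↔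
      T₁ ⊆ G₁.edgeSet ∧ T₂ ⊆ G₂.edgeSet := by
  constructor
  · intro h
    constructor
    · intro e he
      have := h (Or.inl ⟨e, he, rfl⟩)
      induction e using Sym2.ind with
      | _ a b =>
        rw [Sym2.map_pair_eq] at this
        exact aux_disjUnion_adj_inl.mp this
    · intro e he
      have := h (Or.inr ⟨e, he, rfl⟩)
      induction e using Sym2.ind with
      | _ a b =>
        rw [Sym2.map_pair_eq] at this
        exact aux_disjUnion_adj_inr.mp this
  · rintro ⟨h₁, h₂⟩ e (⟨e₁, he₁, rfl⟩ | ⟨e₂, he₂, rfl⟩)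
    · exact SimpleGraph.disjUnion_mem_inl (h₁ he₁)
    · exact SimpleGraph.disjUnion_mem_inr (h₂ he₂)

end DisjUnion

section Forest

variable {V₁ V₂ : Type*} {G₁ : SimpleGraph V₁} {G₂ : SimpleGraph V₂}

lemma aux_forest_union_iff {T₁ : Set (Sym2 V₁)} {T₂ : Set (Sym2 V₂)} :
    (G₁.disjUnion G₂).IsSpanningForest (Sym2.map Sum.inl '' T₁ ∪ Sym2.map Sum.inr '' T₂) ↔
      G₁.IsSpanningForest T₁ ∧ G₂.IsSpanningForest T₂ := by
  constructor
  · rintro ⟨hsub, hacy, hmax⟩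
    rw [aux_union_subset_iff] at hsub
    rw [aux_acyclic_union_iff] at hacy
    constructor
    · refine ⟨hsub.1, hacy.1, ?_⟩
      intro T₁' hle hsub' hacy'
      have hS := hmax (Sym2.map Sum.inl '' T₁' ∪ Sym2.map Sum.inr '' T₂)
        (Set.union_subset_union_left _ (Set.image_mono hle))
        (aux_union_subset_iff.mpr ⟨hsub', hsub.2⟩)
        (aux_acyclic_union_iff.mpr ⟨hacy', hacy.2⟩)
      ext e
      constructor
      · intro he
        have : Sym2.map Sum.inl e ∈ Sym2.map Sum.inl '' T₁ ∪ Sym2.map Sum.inr '' T₂ := by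
          rw [← hS]; exact Or.inl ⟨e, he, rfl⟩
        exact aux_mem_union_inl.mp this
      · exact fun he => hle he
    · refine ⟨hsub.2, hacy.2, ?_⟩
      intro T₂' hle hsub' hacy'
      have hS := hmax (Sym2.map Sum.inl '' T₁ ∪ Sym2.map Sum.inr '' T₂')
        (Set.union_subset_union_right _ (Set.image_mono hle))
        (aux_union_subset_iff.mpr ⟨hsub.1, hsub'⟩)
        (aux_acyclic_union_iff.mpr ⟨hacy.1, hacy'⟩)
      ext e
      constructor
      · intro he
        have : Sym2.map Sum.inr e ∈ Sym2.map Sum.inl '' T₁ ∪ Sym2.map Sum.inr '' T₂ := by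
          rw [← hS]; exact Or.inr ⟨e, he, rfl⟩
        exact aux_mem_union_inr.mp this
      · exact fun he => hle he
  · rintro ⟨⟨hsub₁, hacy₁, hmax₁⟩, ⟨hsub₂, hacy₂, hmax₂⟩⟩
    refine ⟨aux_union_subset_iff.mpr ⟨hsub₁, hsub₂⟩,
      aux_acyclic_union_iff.mpr ⟨hacy₁, hacy₂⟩, ?_⟩
    intro T' hle hsub' hacy'
    have hdecomp := aux_subset_decomp (G₁ := G₁) (G₂ := G₂) hsub'
    set T₁' := Sym2.map (Sum.inl : V₁ → V₁ ⊕ V₂) ⁻¹' T' with hT₁'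
    set T₂' := Sym2.map (Sum.inr : V₂ → V₁ ⊕ V₂) ⁻¹' T' with hT₂'
    have hsub'' : Sym2.map Sum.inl '' T₁' ∪ Sym2.map Sum.inr '' T₂' ⊆
        (G₁.disjUnion G₂).edgeSet := hdecomp ▸ hsub'
    rw [aux_union_subset_iff] at hsub''
    have hacy'' : (SimpleGraph.fromEdgeSet T₁').IsAcyclic ∧
        (SimpleGraph.fromEdgeSet T₂').IsAcyclic := by
      rw [← aux_acyclic_union_iff, ← hdecomp]; exact hacy'
    have hle₁ : T₁ ⊆ T₁' := fun e he => hle (Or.inl ⟨e, he, rfl⟩)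
    have hle₂ : T₂ ⊆ T₂' := fun e he => hle (Or.inr ⟨e, he, rfl⟩)
    have e₁ : T₁' = T₁ := hmax₁ T₁' hle₁ hsub''.1 hacy''.1
    have e₂ : T₂' = T₂ := hmax₂ T₂' hle₂ hsub''.2 hacy''.2
    rw [hdecomp, e₁, e₂]

end Forest

section FinsetAux

variable {V₁ V₂ : Type*} {G₁ : SimpleGraph V₁} {G₂ : SimpleGraph V₂}

/-- The edge equivalence `E(G₁) ⊕ E(G₂) ≃ E(G₁ ⊔ G₂)`. -/
def auxEdgeEquiv (G₁ : SimpleGraph V₁) (G₂ : SimpleGraph V₂) :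
    G₁.edgeSet ⊕ G₂.edgeSet ≃ (G₁.disjUnion G₂).edgeSet :=
  Equiv.ofBijective (Sum.elim (G₁.disjUnionEdgeInl G₂) (G₁.disjUnionEdgeInr G₂)) <| by
    constructor
    · rintro (e₁ | e₁) (e₂ | e₂) h <;>
        simp only [Sum.elim_inl, Sum.elim_inr, SimpleGraph.disjUnionEdgeInl,
          SimpleGraph.disjUnionEdgeInr, Subtype.mk.injEq] at h
      · exact congrArg Sum.inl (Subtype.ext (Sym2.map.injective Sum.inl_injective h))
      · exact absurd h (aux_map_inl_ne_map_inr _ _)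
      · exact absurd h.symm (aux_map_inl_ne_map_inr _ _)
      · exact congrArg Sum.inr (Subtype.ext (Sym2.map.injective Sum.inr_injective h))
    · rintro ⟨e, he⟩
      rcases aux_mem_edgeSet_disjUnion he with ⟨e₁, he₁, rfl⟩ | ⟨e₂, he₂, rfl⟩
      · exact ⟨Sum.inl ⟨e₁, he₁⟩, rfl⟩
      · exact ⟨Sum.inr ⟨e₂, he₂⟩, rfl⟩

@[simp] lemma auxEdgeEquiv_inl (e : G₁.edgeSet) :
    auxEdgeEquiv G₁ G₂ (Sum.inl e) = G₁.disjUnionEdgeInl G₂ e := rfl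

@[simp] lemma auxEdgeEquiv_inr (e : G₂.edgeSet) :
    auxEdgeEquiv G₁ G₂ (Sum.inr e) = G₁.disjUnionEdgeInr G₂ e := rfl

/-- Combine two finsets of edges into a finset of edges of the disjoint union. -/
def auxF (T₁ : Finset (Sym2 V₁)) (T₂ : Finset (Sym2 V₂)) : Finset (Sym2 (V₁ ⊕ V₂)) :=
  T₁.map ⟨Sym2.map Sum.inl, Sym2.map.injective Sum.inl_injective⟩ ∪
    T₂.map ⟨Sym2.map Sum.inr, Sym2.map.injective Sum.inr_injective⟩

lemma aux_coeF (T₁ : Finset (Sym2 V₁)) (T₂ : Finset (Sym2 V₂)) :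
    (auxF T₁ T₂ : Set (Sym2 (V₁ ⊕ V₂))) =
      Sym2.map Sum.inl '' ↑T₁ ∪ Sym2.map Sum.inr '' ↑T₂ := by
  simp [auxF]

lemma aux_mem_F_inl {T₁ : Finset (Sym2 V₁)} {T₂ : Finset (Sym2 V₂)} {e : Sym2 V₁} :
    Sym2.map Sum.inl e ∈ auxF T₁ T₂ ↔ e ∈ T₁ := by
  rw [← Finset.mem_coe, aux_coeF, aux_mem_union_inl, Finset.mem_coe]

lemma aux_mem_F_inr {T₁ : Finset (Sym2 V₁)} {T₂ : Finset (Sym2 V₂)} {e : Sym2 V₂} :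
    Sym2.map Sum.inr e ∈ auxF T₁ T₂ ↔ e ∈ T₂ := by
  rw [← Finset.mem_coe, aux_coeF, aux_mem_union_inr, Finset.mem_coe]

end FinsetAux

section Product

variable {V₁ V₂ : Type*} [Fintype V₁] [Fintype V₂]
variable {G₁ : SimpleGraph V₁} {G₂ : SimpleGraph V₂}
variable {k : Type*} [CommRing k]

lemma aux_prod_split (T₁ : Finset (Sym2 V₁)) (T₂ : Finset (Sym2 V₂))
    (t : (G₁.disjUnion G₂).edgeSet → k) :
    ∏ e ∈ Finset.univ.filter
        (fun e : (G₁.disjUnion G₂).edgeSet => (e : Sym2 (V₁ ⊕ V₂)) ∉ auxF T₁ T₂), t e =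
      (∏ e ∈ Finset.univ.filter (fun e : G₁.edgeSet => (e : Sym2 V₁) ∉ T₁),
        (t ∘ G₁.disjUnionEdgeInl G₂) e) *
      (∏ e ∈ Finset.univ.filter (fun e : G₂.edgeSet => (e : Sym2 V₂) ∉ T₂),
        (t ∘ G₁.disjUnionEdgeInr G₂) e) := by
  rw [Finset.prod_filter, Finset.prod_filter, Finset.prod_filter,
    ← Equiv.prod_comp (auxEdgeEquiv G₁ G₂), Fintype.prod_sum_type]
  congr 1
  · refine Finset.prod_congr rfl fun e₁ _ => ?_
    have : ((auxEdgeEquiv G₁ G₂ (Sum.inl e₁) : Sym2 (V₁ ⊕ V₂)) ∉ auxF T₁ T₂) ↔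
        ((e₁ : Sym2 V₁) ∉ T₁) := by
      simp only [auxEdgeEquiv_inl, SimpleGraph.disjUnionEdgeInl]
      exact not_congr aux_mem_F_inl
    exact if_congr this rfl rfl
  · refine Finset.prod_congr rfl fun e₂ _ => ?_
    have : ((auxEdgeEquiv G₁ G₂ (Sum.inr e₂) : Sym2 (V₁ ⊕ V₂)) ∉ auxF T₁ T₂) ↔
        ((e₂ : Sym2 V₂) ∉ T₂) := by
      simp only [auxEdgeEquiv_inr, SimpleGraph.disjUnionEdgeInr]
      exact not_congr aux_mem_F_inr
    exact if_congr this rfl rfl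

set_option maxHeartbeats 1000000 in
lemma aux_aeval_kirchhoff (t : (G₁.disjUnion G₂).edgeSet → k) :
    (MvPolynomial.aeval t) (G₁.disjUnion G₂).kirchhoff =
      (MvPolynomial.aeval (t ∘ G₁.disjUnionEdgeInl G₂)) G₁.kirchhoff *
        (MvPolynomial.aeval (t ∘ G₁.disjUnionEdgeInr G₂)) G₂.kirchhoff := by
  simp only [SimpleGraph.kirchhoff, map_sum, map_prod, aeval_X]
  rw [Finset.sum_mul_sum, ← Finset.sum_product']
  refine Finset.sum_nbij'
    (fun T => (T.preimage (Sym2.map Sum.inl)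
        ((Sym2.map.injective Sum.inl_injective).injOn),
      T.preimage (Sym2.map Sum.inr) ((Sym2.map.injective Sum.inr_injective).injOn)))
    (fun p => auxF p.1 p.2) ?_ ?_ ?_ ?_ ?_
  · intro T hT
    rw [Finset.mem_filter] at hT
    have hsub : (T : Set (Sym2 (V₁ ⊕ V₂))) ⊆ (G₁.disjUnion G₂).edgeSet := hT.2.1
    have hdec := aux_subset_decomp (G₁ := G₁) (G₂ := G₂) hsub
    have hf : (G₁.disjUnion G₂).IsSpanningForest
        (Sym2.map Sum.inl '' (Sym2.map Sum.inl ⁻¹' (↑T : Set (Sym2 (V₁ ⊕ V₂)))) ∪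
          Sym2.map Sum.inr '' (Sym2.map Sum.inr ⁻¹' (↑T : Set (Sym2 (V₁ ⊕ V₂))))) := by
      rw [← hdec]; exact hT.2
    rw [aux_forest_union_iff] at hf
    rw [Finset.mem_product, Finset.mem_filter, Finset.mem_filter]
    refine ⟨⟨Finset.mem_univ _, ?_⟩, Finset.mem_univ _, ?_⟩
    · rw [Finset.coe_preimage]; exact hf.1
    · rw [Finset.coe_preimage]; exact hf.2
  · rintro ⟨T₁, T₂⟩ hp
    rw [Finset.mem_product, Finset.mem_filter, Finset.mem_filter] at hp
    rw [Finset.mem_filter]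
    exact ⟨Finset.mem_univ _, by
      rw [aux_coeF]; exact aux_forest_union_iff.mpr ⟨hp.1.2, hp.2.2⟩⟩
  · intro T hT
    rw [Finset.mem_filter] at hT
    have hsub : (T : Set (Sym2 (V₁ ⊕ V₂))) ⊆ (G₁.disjUnion G₂).edgeSet := hT.2.1
    apply Finset.coe_injective
    rw [aux_coeF, Finset.coe_preimage, Finset.coe_preimage]
    exact (aux_subset_decomp (G₁ := G₁) (G₂ := G₂) hsub).symm
  · rintro ⟨T₁, T₂⟩ _
    refine Prod.ext ?_ ?_ <;> dsimp only
    · ext e; rw [Finset.mem_preimage, aux_mem_F_inl]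
    · ext e; rw [Finset.mem_preimage, aux_mem_F_inr]
  · intro T hT
    rw [Finset.mem_filter] at hT
    have hsub : (T : Set (Sym2 (V₁ ⊕ V₂))) ⊆ (G₁.disjUnion G₂).edgeSet := hT.2.1
    have hTF : auxF (T.preimage (Sym2.map Sum.inl)
          ((Sym2.map.injective Sum.inl_injective).injOn))
        (T.preimage (Sym2.map Sum.inr)
          ((Sym2.map.injective Sum.inr_injective).injOn)) = T := by
      apply Finset.coe_injective
      rw [aux_coeF, Finset.coe_preimage, Finset.coe_preimage]
      exact (aux_subset_decomp (G₁ := G₁) (G₂ := G₂) hsub).symm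
    have hps := aux_prod_split (T.preimage (Sym2.map Sum.inl)
          ((Sym2.map.injective Sum.inl_injective).injOn))
        (T.preimage (Sym2.map Sum.inr)
          ((Sym2.map.injective Sum.inr_injective).injOn)) t
    rw [hTF] at hps
    convert hps using 2
    exact Finset.filter_congr_decidable _ _ _

end Product


/-- Under the canonical bijection `k^{E(G)} ≅ k^{E(G₁)} × k^{E(G₂)}`
(coming from the identification `E(G) ≅ E(G₁) ⊕ E(G₂)` of the edge set of the disjoint
union `G = G₁ ⊔ G₂`), the complement of the affine graph hypersurface of `G` is identified
with the product of the complements. -/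
theorem graphHypersurfaceComplement_disjUnion {V₁ V₂ : Type*} [Fintype V₁] [Fintype V₂]
    (G₁ : SimpleGraph V₁) (G₂ : SimpleGraph V₂) (k : Type*) [Field k] :
    Function.Bijective
      (fun t : (G₁.disjUnion G₂).edgeSet → k =>
        (t ∘ G₁.disjUnionEdgeInl G₂, t ∘ G₁.disjUnionEdgeInr G₂)) ∧
    ∀ t : (G₁.disjUnion G₂).edgeSet → k,
      t ∈ (G₁.disjUnion G₂).graphHypersurfaceComplement k ↔
        (t ∘ G₁.disjUnionEdgeInl G₂ ∈ G₁.graphHypersurfaceComplement k ∧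
         t ∘ G₁.disjUnionEdgeInr G₂ ∈ G₂.graphHypersurfaceComplement k) := by
  constructor
  · constructor
    · intro t t' h
      rw [Prod.mk.injEq] at h
      funext e
      obtain ⟨x, rfl⟩ := (auxEdgeEquiv G₁ G₂).surjective e
      cases x with
      | inl e₁ => exact congrFun h.1 e₁
      | inr e₂ => exact congrFun h.2 e₂
    · intro p
      refine ⟨Sum.elim p.1 p.2 ∘ (auxEdgeEquiv G₁ G₂).symm,
        Prod.ext (funext fun e₁ => ?_) (funext fun e₂ => ?_)⟩
      · show Sum.elim p.1 p.2 ((auxEdgeEquiv G₁ G₂).symm (G₁.disjUnionEdgeInl G₂ e₁)) = p.1 e₁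
        rw [← auxEdgeEquiv_inl, Equiv.symm_apply_apply, Sum.elim_inl]
      · show Sum.elim p.1 p.2 ((auxEdgeEquiv G₁ G₂).symm (G₁.disjUnionEdgeInr G₂ e₂)) = p.2 e₂
        rw [← auxEdgeEquiv_inr, Equiv.symm_apply_apply, Sum.elim_inr]
  · intro t
    simp only [SimpleGraph.graphHypersurfaceComplement, Set.mem_setOf_eq,
      aux_aeval_kirchhoff, ne_eq, mul_eq_zero, not_or]
end
end

section
/- Let G₁ and G₂ be finite simple graphs on finite vertex sets V₁ and V₂, each containing at least one cycle (neither G₁ nor G₂ is acyclic), let G be their disjoint union on V₁ ⊕ V₂, and let k be a field. Then: (a) for every t = (t₁, t₂) ∈ k^{E(G₁)} × k^{E(G₂)} ≅ k^{E(G)} with Ψ_G(t) ≠ 0 one has t₁ ≠ 0 and t₂ ≠ 0, so that the assignment [t] ↦ ([t₁], [t₂]) defines a map from ℙ(k^{E(G)}) ∖ X_G to (ℙ(k^{E(G₁)}) ∖ X_{G₁}) × (ℙ(k^{E(G₂)}) ∖ X_{G₂}); and (b) this map is surjective and each of its fibers is in bijection with the group of units kˣ = k ∖ {0}. -/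
open scoped Classical
noncomputable section

open MvPolynomial

/-- The complement of the projective graph hypersurface `X_G` in `ℙ(k^{E(G)})`:
since `Ψ_G` is homogeneous, a point lies off `X_G` iff `Ψ_G` is nonzero on a
(equivalently, any) nonzero representative. -/
def SimpleGraph.projHypersurfaceComplement {V : Type*} [Fintype V] (G : SimpleGraph V)
    (k : Type*) [Field k] : Set (Projectivization k (G.edgeSet → k)) :=
  {p | (MvPolynomial.aeval p.rep) G.kirchhoff ≠ 0}

namespace SimpleGraph

section Generic
variable {V : Type*}

lemma IsAcyclic.anti' {G H : SimpleGraph V} (h : H ≤ G) (hG : G.IsAcyclic) : H.IsAcyclic :=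
  fun _ c hc => hG (c.mapLe h) ((SimpleGraph.Walk.mapLe_isCycle h).2 hc)

/-- Adding an edge between two non-reachable vertices of an acyclic graph keeps it acyclic. -/
lemma IsAcyclic.sup_edge {G : SimpleGraph V} (hG : G.IsAcyclic) {u v : V}
    (hne : u ≠ v) (hr : ¬ G.Reachable u v) : (G ⊔ edge u v).IsAcyclic := by
  intro w c hc
  by_cases he : s(u, v) ∈ c.edges
  · have hadj : (G ⊔ edge u v).Adj u v := Or.inr ((edge_adj u v u v).2 ⟨Or.inl ⟨rfl, rfl⟩, hne⟩)
    have h2 := (adj_and_reachable_delete_edges_iff_exists_cycle (G := G ⊔ edge u v)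
      (v := u) (w := v)).2 ⟨w, c, hc, he⟩
    refine hr (h2.2.mono ?_)
    intro a b hab
    rw [deleteEdges, sdiff_adj, sup_adj, edge_adj, fromEdgeSet_adj] at hab
    simp only [Set.mem_singleton_iff, Sym2.eq_iff] at hab
    tauto
  · have hsub : ∀ e ∈ c.edges, e ∈ G.edgeSet := by
      intro e hce
      have h3 := c.edges_subset_edgeSet hce
      rw [edgeSet_sup] at h3
      rcases h3 with h | h
      · exact h
      · exfalso
        rw [edge, edgeSet_fromEdgeSet] at h
        rcases h with ⟨h, _⟩
        rw [Set.mem_singleton_iff] at h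
        exact he (h ▸ hce)
    exact hG (c.transfer G hsub) (hc.transfer hsub)

lemma IsSpanningForest.le {G : SimpleGraph V} {T : Set (Sym2 V)}
    (hT : G.IsSpanningForest T) : fromEdgeSet T ≤ G := by
  have := fromEdgeSet_mono hT.1
  rwa [fromEdgeSet_edgeSet] at this

lemma IsSpanningForest.reachable_of_adj {G : SimpleGraph V} {T : Set (Sym2 V)}
    (hT : G.IsSpanningForest T) {u v : V} (h : G.Adj u v) : (fromEdgeSet T).Reachable u v := by
  by_contra hr
  have hins : fromEdgeSet (insert s(u, v) T) = fromEdgeSet T ⊔ edge u v := by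
    rw [Set.insert_eq, fromEdgeSet_union, sup_comm]
    rfl
  have hac : (fromEdgeSet (insert s(u, v) T)).IsAcyclic := by
    rw [hins]; exact hT.2.1.sup_edge h.ne hr
  have heq := hT.2.2 _ (Set.subset_insert _ _)
    (Set.insert_subset ((mem_edgeSet _).2 h) hT.1) hac
  have hmem : s(u, v) ∈ T := heq ▸ Set.mem_insert _ _
  exact hr (Adj.reachable ((fromEdgeSet_adj _).2 ⟨hmem, h.ne⟩))

lemma IsSpanningForest.reachable_iff {G : SimpleGraph V} {T : Set (Sym2 V)}
    (hT : G.IsSpanningForest T) {u v : V} :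
    (fromEdgeSet T).Reachable u v ↔ G.Reachable u v := by
  refine ⟨fun h => h.mono hT.le, fun h => ?_⟩
  obtain ⟨p⟩ := h
  induction p with
  | nil => exact Reachable.refl _
  | cons hadj _ ih => exact (hT.reachable_of_adj hadj).trans ih

/-- Deleting one edge: every pair reachable in `H` falls into one of three cases. -/
lemma reachable_delete_cases {H : SimpleGraph V} {a b x y : V}
    (h : H.Reachable x y) :
    (H \ fromEdgeSet {s(a, b)}).Reachable x y ∨
    ((H \ fromEdgeSet {s(a, b)}).Reachable x a ∧ (H \ fromEdgeSet {s(a, b)}).Reachable b y) ∨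
    ((H \ fromEdgeSet {s(a, b)}).Reachable x b ∧ (H \ fromEdgeSet {s(a, b)}).Reachable a y) := by
  obtain ⟨p⟩ := h
  induction p with
  | nil => exact Or.inl (Reachable.refl _)
  | @cons x z y hadj p ih =>
    by_cases he : s(x, z) = s(a, b)
    · rw [Sym2.eq_iff] at he
      rcases he with ⟨hxa, hzb⟩ | ⟨hxb, hza⟩
      · subst hxa; subst hzb
        rcases ih with h1 | ⟨h1, h2⟩ | ⟨h1, h2⟩
        · exact Or.inr (Or.inl ⟨Reachable.refl _, h1⟩)
        · exact Or.inr (Or.inl ⟨Reachable.refl _, h2⟩)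
        · exact Or.inl h2
      · subst hxb; subst hza
        rcases ih with h1 | ⟨h1, h2⟩ | ⟨h1, h2⟩
        · exact Or.inr (Or.inr ⟨Reachable.refl _, h1⟩)
        · exact Or.inl h2
        · exact Or.inr (Or.inr ⟨Reachable.refl _, h2⟩)
    · have hadj' : (H \ fromEdgeSet {s(a, b)}).Adj x z := by
        rw [sdiff_adj]; rw [fromEdgeSet_adj]
        exact ⟨hadj, fun hh => he hh.1⟩
      rcases ih with h1 | ⟨h1, h2⟩ | ⟨h1, h2⟩
      · exact Or.inl (hadj'.reachable.trans h1)
      · exact Or.inr (Or.inl ⟨hadj'.reachable.trans h1, h2⟩)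
      · exact Or.inr (Or.inr ⟨hadj'.reachable.trans h1, h2⟩)

lemma card_connectedComponent_delete_bridge [Finite V] {H : SimpleGraph V} {a b : V}
    (hadj : H.Adj a b) (hbr : ¬ (H \ fromEdgeSet {s(a, b)}).Reachable a b) :
    Nat.card (H \ fromEdgeSet {s(a, b)}).ConnectedComponent
      = Nat.card H.ConnectedComponent + 1 := by
  set H' := H \ fromEdgeSet {s(a, b)} with hH'
  have hle : H' ≤ H := sdiff_le
  set π : H'.ConnectedComponent → H.ConnectedComponent :=
    ConnectedComponent.map (Hom.ofLE hle) with hπ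
  have hπmk : ∀ x : V, π (H'.connectedComponentMk x) = H.connectedComponentMk x := fun x =>
    ConnectedComponent.map_mk _ _
  have key : ∀ c c' : H'.ConnectedComponent, π c = π c' → c = c' ∨
      (c = H'.connectedComponentMk a ∧ c' = H'.connectedComponentMk b) ∨
      (c = H'.connectedComponentMk b ∧ c' = H'.connectedComponentMk a) := by
    refine ConnectedComponent.ind₂ (fun x y h => ?_)
    rw [hπmk, hπmk, ConnectedComponent.eq] at h
    rcases reachable_delete_cases (a := a) (b := b) h with h1 | ⟨h1, h2⟩ | ⟨h1, h2⟩
    · exact Or.inl (ConnectedComponent.eq.2 h1)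
    · exact Or.inr (Or.inl ⟨ConnectedComponent.eq.2 h1, ConnectedComponent.eq.2 h2.symm⟩)
    · exact Or.inr (Or.inr ⟨ConnectedComponent.eq.2 h1, ConnectedComponent.eq.2 h2.symm⟩)
  have hab' : H'.connectedComponentMk a ≠ H'.connectedComponentMk b :=
    fun h => hbr (ConnectedComponent.eq.1 h)
  have hf : Function.Bijective
      (fun c : {c : H'.ConnectedComponent // c ≠ H'.connectedComponentMk b} => π c.1) := by
    constructor
    · rintro ⟨c, hc⟩ ⟨c', hc'⟩ h
      rcases key c c' h with h1 | ⟨h1, h2⟩ | ⟨h1, h2⟩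
      · exact Subtype.ext h1
      · exact absurd h2 hc'
      · exact absurd h1 hc
    · refine ConnectedComponent.ind (fun x => ?_)
      by_cases hx : H'.connectedComponentMk x = H'.connectedComponentMk b
      · refine ⟨⟨H'.connectedComponentMk a, fun h => hab' h⟩, ?_⟩
        have hxb : H.Reachable x b := (ConnectedComponent.eq.1 hx).mono hle
        have : H.Reachable x a := hxb.trans hadj.symm.reachable
        simp only [hπmk]
        exact ConnectedComponent.eq.2 this.symm
      · exact ⟨⟨H'.connectedComponentMk x, hx⟩, hπmk x⟩
  have h1 : Nat.card {c : H'.ConnectedComponent // c ≠ H'.connectedComponentMk b}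
      = Nat.card H.ConnectedComponent := Nat.card_eq_of_bijective _ hf
  have h2 : Nat.card {c : H'.ConnectedComponent // c ≠ H'.connectedComponentMk b} + 1
      = Nat.card H'.ConnectedComponent := by
    letI := Fintype.ofFinite H'.ConnectedComponent
    rw [← Nat.card_congr (Equiv.optionSubtypeNe (H'.connectedComponentMk b))]
    simp [Nat.card_eq_fintype_card]
  omega

lemma IsAcyclic.ncard_edgeSet [Finite V] {H : SimpleGraph V} (hH : H.IsAcyclic) :
    H.edgeSet.ncard + Nat.card H.ConnectedComponent = Nat.card V := by
  generalize hn : H.edgeSet.ncard = n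
  induction n generalizing H with
  | zero =>
    have hbot : H = ⊥ := by
      rw [← edgeSet_eq_empty]
      have hfin : H.edgeSet.Finite := Set.toFinite _
      exact (Set.ncard_eq_zero hfin).1 hn
    subst hbot
    have hbij : Function.Bijective ((⊥ : SimpleGraph V).connectedComponentMk) := by
      constructor
      · intro x y h
        exact reachable_bot.1 (ConnectedComponent.eq.1 h)
      · exact ConnectedComponent.ind (fun x => ⟨x, rfl⟩)
    simpa using (Nat.card_eq_of_bijective _ hbij).symm
  | succ n ih =>
    have hne : H.edgeSet.Nonempty := by
      rw [Set.nonempty_iff_ne_empty]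
      intro h
      rw [h, Set.ncard_empty] at hn
      omega
    obtain ⟨e, he⟩ := hne
    induction e using Sym2.ind with
    | _ a b =>
    have hadj : H.Adj a b := (mem_edgeSet _).1 he
    set H' := H \ fromEdgeSet {s(a, b)} with hH'
    have hE' : H'.edgeSet = H.edgeSet \ {s(a, b)} := by
      rw [hH', edgeSet_sdiff, edgeSet_fromEdgeSet, edgeSet_sdiff_sdiff_isDiag]
    have hbr : ¬ H'.Reachable a b := by
      have := isAcyclic_iff_forall_adj_isBridge.1 hH hadj
      exact isBridge_iff.1 this
    have hcard : H'.edgeSet.ncard = n := by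
      rw [hE', Set.ncard_diff_singleton_of_mem he]
      omega
    have hacy : H'.IsAcyclic := hH.anti sdiff_le
    have := ih hacy hcard
    rw [card_connectedComponent_delete_bridge hadj hbr] at this
    omega

lemma IsSpanningForest.ncard_add_card [Fintype V] {G : SimpleGraph V} {T : Set (Sym2 V)}
    (hT : G.IsSpanningForest T) :
    T.ncard + Nat.card G.ConnectedComponent = Fintype.card V := by
  have hE : (fromEdgeSet T).edgeSet = T := by
    rw [edgeSet_fromEdgeSet]
    refine sdiff_eq_left.2 (Set.disjoint_left.2 (fun e heT hdiag => ?_))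
    exact (G.not_isDiag_of_mem_edgeSet (hT.1 heT)) hdiag
  have hbij : Function.Bijective
      (ConnectedComponent.map (Hom.ofLE hT.le)) := by
    constructor
    · refine ConnectedComponent.ind₂ (fun x y h => ?_)
      rw [ConnectedComponent.map_mk, ConnectedComponent.map_mk, ConnectedComponent.eq] at h
      exact ConnectedComponent.eq.2 (hT.reachable_iff.2 h)
    · refine ConnectedComponent.ind (fun x => ?_)
      exact ⟨(fromEdgeSet T).connectedComponentMk x, ConnectedComponent.map_mk _ _⟩
  have hcc : Nat.card (fromEdgeSet T).ConnectedComponent = Nat.card G.ConnectedComponent :=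
    Nat.card_eq_of_bijective _ hbij
  have := hT.2.1.ncard_edgeSet
  rw [hE, hcc] at this
  simpa [Nat.card_eq_fintype_card] using this

/-- The common degree of the monomials of the Kirchhoff polynomial. -/
def kirchhoffDeg [Fintype V] (G : SimpleGraph V) : ℕ :=
  Fintype.card G.edgeSet - (Fintype.card V - Nat.card G.ConnectedComponent)

lemma IsSpanningForest.card_filter_not_mem [Fintype V] {G : SimpleGraph V}
    {T : Finset (Sym2 V)} (hT : G.IsSpanningForest ↑T) :
    (Finset.univ.filter (fun e : G.edgeSet => (e : Sym2 V) ∉ T)).card = G.kirchhoffDeg := by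
  have hmem : (Finset.univ.filter (fun e : G.edgeSet => (e : Sym2 V) ∈ T)).card = T.card := by
    refine Finset.card_bij (fun e _ => (e : Sym2 V)) ?_ ?_ ?_
    · intro e he
      exact (Finset.mem_filter.1 he).2
    · intro e₁ _ e₂ _ h
      exact Subtype.ext h
    · intro t ht
      exact ⟨⟨t, hT.1 ht⟩, Finset.mem_filter.2 ⟨Finset.mem_univ _, ht⟩, rfl⟩
  have hcard : T.card + Nat.card G.ConnectedComponent = Fintype.card V := by
    have := hT.ncard_add_card
    rwa [Set.ncard_coe_finset] at this
  have hnot : (Finset.univ.filter (fun e : G.edgeSet => (e : Sym2 V) ∉ T)).card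
      = Fintype.card G.edgeSet - T.card := by
    rw [← hmem]
    rw [Finset.filter_not, Finset.card_sdiff_of_subset (Finset.filter_subset _ _), Finset.card_univ]
  have hle : T.card ≤ Fintype.card G.edgeSet := by
    rw [← hmem]
    exact le_trans (Finset.card_filter_le _ _) (by rw [Finset.card_univ])
  rw [hnot, kirchhoffDeg]
  omega

variable {k : Type*} [CommRing k]

lemma aeval_kirchhoff_eq [Fintype V] (G : SimpleGraph V) (t : G.edgeSet → k) :
    aeval t G.kirchhoff =
      ∑ T ∈ Finset.univ.filter (fun T : Finset (Sym2 V) => G.IsSpanningForest ↑T),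
        ∏ e ∈ Finset.univ.filter (fun e : G.edgeSet => (e : Sym2 V) ∉ T), t e := by
  simp [kirchhoff, map_sum, map_prod]

lemma aeval_kirchhoff_smul [Fintype V] (G : SimpleGraph V) (c : k) (t : G.edgeSet → k) :
    aeval (c • t) G.kirchhoff = c ^ G.kirchhoffDeg * aeval t G.kirchhoff := by
  rw [aeval_kirchhoff_eq, aeval_kirchhoff_eq, Finset.mul_sum]
  refine Finset.sum_congr rfl (fun T hT => ?_)
  have hm := IsSpanningForest.card_filter_not_mem (Finset.mem_filter.1 hT).2
  calc ∏ e ∈ Finset.univ.filter (fun e : G.edgeSet => (e : Sym2 V) ∉ T), (c • t) e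
      = ∏ e ∈ Finset.univ.filter (fun e : G.edgeSet => (e : Sym2 V) ∉ T), c * t e := rfl
    _ = c ^ G.kirchhoffDeg *
        ∏ e ∈ Finset.univ.filter (fun e : G.edgeSet => (e : Sym2 V) ∉ T), t e := by
        rw [Finset.prod_mul_distrib, Finset.prod_const, hm]

lemma aeval_kirchhoff_zero_of_not_isAcyclic [Fintype V] {G : SimpleGraph V}
    (h : ¬ G.IsAcyclic) : aeval (0 : G.edgeSet → k) G.kirchhoff = 0 := by
  rw [aeval_kirchhoff_eq]
  refine Finset.sum_eq_zero (fun T hT => ?_)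
  have hSF := (Finset.mem_filter.1 hT).2
  have hne : (Finset.univ.filter (fun e : G.edgeSet => (e : Sym2 V) ∉ T)).Nonempty := by
    by_contra hcon
    rw [Finset.not_nonempty_iff_eq_empty, Finset.filter_eq_empty_iff] at hcon
    have hsub : G.edgeSet ⊆ ↑T := by
      intro e he
      have := hcon (Finset.mem_univ (⟨e, he⟩ : G.edgeSet))
      simpa using this
    have : (T : Set (Sym2 V)) = G.edgeSet := Set.Subset.antisymm hSF.1 hsub
    have hacy := hSF.2.1
    rw [this, fromEdgeSet_edgeSet] at hacy
    exact h hacy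
  obtain ⟨e, he⟩ := hne
  exact Finset.prod_eq_zero he rfl


end Generic

section Sum
variable {V₁ V₂ : Type*} {A : SimpleGraph V₁} {B : SimpleGraph V₂}

lemma sum_reachable_liftRel {x y : V₁ ⊕ V₂} (h : (A ⊕g B).Reachable x y) :
    Sum.LiftRel A.Reachable B.Reachable x y := by
  obtain ⟨p⟩ := h
  induction p with
  | nil =>
    rename_i u
    cases u with
    | inl a => exact Sum.LiftRel.inl (Reachable.refl a)
    | inr a => exact Sum.LiftRel.inr (Reachable.refl a)
  | @cons x z y hadj p ih =>
    cases x with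
    | inl a =>
      cases z with
      | inl c =>
        cases ih with
        | inl h' => exact Sum.LiftRel.inl ((Adj.reachable (by simpa using hadj)).trans h')
      | inr c => simp at hadj
    | inr a =>
      cases z with
      | inl c => simp at hadj
      | inr c =>
        cases ih with
        | inr h' => exact Sum.LiftRel.inr ((Adj.reachable (by simpa using hadj)).trans h')

lemma sum_reachable_inl {a b : V₁} :
    (A ⊕g B).Reachable (Sum.inl a) (Sum.inl b) ↔ A.Reachable a b := by
  constructor
  · intro h
    cases sum_reachable_liftRel h with
    | inl h' => exact h'
  · intro h
    exact h.map (Embedding.sumInl (H := B)).toHom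

lemma sum_reachable_inr {a b : V₂} :
    (A ⊕g B).Reachable (Sum.inr a) (Sum.inr b) ↔ B.Reachable a b := by
  constructor
  · intro h
    cases sum_reachable_liftRel h with
    | inr h' => exact h'
  · intro h
    exact h.map (Embedding.sumInr (G := A)).toHom

lemma not_sum_reachable_inl_inr {a : V₁} {b : V₂} :
    ¬ (A ⊕g B).Reachable (Sum.inl a) (Sum.inr b) := by
  intro h
  cases sum_reachable_liftRel h

lemma sum_sdiff_edge_inl {a b : V₁} :
    (A ⊕g B) \ fromEdgeSet {s(Sum.inl a, Sum.inl b)}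
      = ((A \ fromEdgeSet {s(a, b)}) ⊕g B : SimpleGraph (V₁ ⊕ V₂)) := by
  ext x y
  cases x <;> cases y <;>
    simp [sdiff_adj, fromEdgeSet_adj, Sym2.eq_iff]

lemma sum_sdiff_edge_inr {a b : V₂} :
    (A ⊕g B) \ fromEdgeSet {s(Sum.inr a, Sum.inr b)}
      = (A ⊕g (B \ fromEdgeSet {s(a, b)}) : SimpleGraph (V₁ ⊕ V₂)) := by
  ext x y
  cases x <;> cases y <;>
    simp [sdiff_adj, fromEdgeSet_adj, Sym2.eq_iff]

lemma sum_isAcyclic_iff :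
    (A ⊕g B).IsAcyclic ↔ A.IsAcyclic ∧ B.IsAcyclic := by
  constructor
  · intro h
    constructor
    · intro v c hc
      exact h (c.map (Embedding.sumInl (H := B)).toHom)
        (hc.map (fun _ _ => by simp))
    · intro v c hc
      exact h (c.map (Embedding.sumInr (G := A)).toHom)
        (hc.map (fun _ _ => by simp))
  · rintro ⟨hA, hB⟩
    rw [isAcyclic_iff_forall_adj_isBridge]
    intro x y hxy
    cases x with
    | inl a =>
      cases y with
      | inl b =>
        have hab : A.Adj a b := by simpa using hxy
        have hbr := isAcyclic_iff_forall_adj_isBridge.1 hA hab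
        rw [isBridge_iff] at hbr ⊢
        show ¬ ((A ⊕g B) \ fromEdgeSet {s(Sum.inl a, Sum.inl b)}).Reachable _ _
        rw [sum_sdiff_edge_inl, sum_reachable_inl]
        exact hbr
      | inr b => simp at hxy
    | inr a =>
      cases y with
      | inl b => simp at hxy
      | inr b =>
        have hab : B.Adj a b := by simpa using hxy
        have hbr := isAcyclic_iff_forall_adj_isBridge.1 hB hab
        rw [isBridge_iff] at hbr ⊢
        show ¬ ((A ⊕g B) \ fromEdgeSet {s(Sum.inr a, Sum.inr b)}).Reachable _ _
        rw [sum_sdiff_edge_inr, sum_reachable_inr]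
        exact hbr

lemma fromEdgeSet_union_images (S₁ : Set (Sym2 V₁)) (S₂ : Set (Sym2 V₂)) :
    fromEdgeSet (Sym2.map Sum.inl '' S₁ ∪ Sym2.map Sum.inr '' S₂)
      = (fromEdgeSet S₁ ⊕g fromEdgeSet S₂ : SimpleGraph (V₁ ⊕ V₂)) := by
  ext x y
  have hmeml : ∀ (a b : V₁), s(Sum.inl a, Sum.inl b) ∈ Sym2.map (Sum.inl : V₁ → V₁ ⊕ V₂) '' S₁ ↔ s(a, b) ∈ S₁ := by
    intro a b
    constructor
    · rintro ⟨e, he, hmap⟩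
      have : e = s(a, b) := Sym2.map.injective Sum.inl_injective (by simpa using hmap)
      exact this ▸ he
    · intro h
      exact ⟨s(a, b), h, rfl⟩
  have hmemr : ∀ (a b : V₂), s(Sum.inr a, Sum.inr b) ∈ Sym2.map (Sum.inr : V₂ → V₁ ⊕ V₂) '' S₂ ↔ s(a, b) ∈ S₂ := by
    intro a b
    constructor
    · rintro ⟨e, he, hmap⟩
      have : e = s(a, b) := Sym2.map.injective Sum.inr_injective (by simpa using hmap)
      exact this ▸ he
    · intro h
      exact ⟨s(a, b), h, rfl⟩
  cases x with
  | inl a =>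
    cases y with
    | inl b =>
      rw [fromEdgeSet_adj]
      simp only [Set.mem_union, hmeml a b, sum_adj, fromEdgeSet_adj]
      constructor
      · rintro ⟨h | h, hne⟩
        · exact ⟨h, fun hab => hne (by rw [hab])⟩
        · exfalso
          obtain ⟨e, _, hmap⟩ := h
          induction e using Sym2.ind with
          | _ c d => simp at hmap
      · rintro ⟨h, hne⟩
        exact ⟨Or.inl h, by simpa using hne⟩
    | inr b =>
      rw [fromEdgeSet_adj]
      simp only [sum_adj]
      constructor
      · rintro ⟨h | h, _⟩ <;>
        · obtain ⟨e, _, hmap⟩ := h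
          induction e using Sym2.ind with
          | _ c d => simp at hmap
      · intro h
        exact absurd h (by simp)
  | inr a =>
    cases y with
    | inl b =>
      rw [fromEdgeSet_adj]
      simp only [sum_adj]
      constructor
      · rintro ⟨h | h, _⟩ <;>
        · obtain ⟨e, _, hmap⟩ := h
          induction e using Sym2.ind with
          | _ c d => simp at hmap
      · intro h
        exact absurd h (by simp)
    | inr b =>
      rw [fromEdgeSet_adj]
      simp only [Set.mem_union, hmemr a b, sum_adj, fromEdgeSet_adj]
      constructor
      · rintro ⟨h | h, hne⟩
        · exfalso
          obtain ⟨e, _, hmap⟩ := h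
          induction e using Sym2.ind with
          | _ c d => simp at hmap
        · exact ⟨h, fun hab => hne (by rw [hab])⟩
      · rintro ⟨h, hne⟩
        exact ⟨Or.inr h, by simpa using hne⟩


end Sum

section DisjUnion
variable {V₁ V₂ : Type*} {G₁ : SimpleGraph V₁} {G₂ : SimpleGraph V₂}
lemma map_inl_ne_map_inr (e₁ : Sym2 V₁) (e₂ : Sym2 V₂) :
    Sym2.map (Sum.inl : V₁ → V₁ ⊕ V₂) e₁ ≠ Sym2.map Sum.inr e₂ := by
  induction e₁ using Sym2.ind with
  | _ a b =>
    induction e₂ using Sym2.ind with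
    | _ c d => simp

lemma disjUnion_eq : G₁.disjUnion G₂ = G₁ ⊕g G₂ := by
  ext x y
  cases x <;> cases y <;> simp [disjUnion]

lemma disjUnion_edge_cases {e : Sym2 (V₁ ⊕ V₂)} (he : e ∈ (G₁.disjUnion G₂).edgeSet) :
    (∃ e₁ ∈ G₁.edgeSet, e = Sym2.map Sum.inl e₁) ∨
    (∃ e₂ ∈ G₂.edgeSet, e = Sym2.map Sum.inr e₂) := by
  induction e using Sym2.ind with
  | _ x y =>
    rcases he with ⟨a, b, hx, hy, h⟩ | ⟨a, b, hx, hy, h⟩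
    · subst hx; subst hy
      exact Or.inl ⟨s(a, b), h, rfl⟩
    · subst hx; subst hy
      exact Or.inr ⟨s(a, b), h, rfl⟩

lemma preimage_inl_subset {T : Set (Sym2 (V₁ ⊕ V₂))} (hT : T ⊆ (G₁.disjUnion G₂).edgeSet) :
    Sym2.map Sum.inl ⁻¹' T ⊆ G₁.edgeSet := by
  intro e₁ he
  rcases disjUnion_edge_cases (hT he) with ⟨e₁', h₁, heq⟩ | ⟨e₂, _, heq⟩
  · rwa [Sym2.map.injective Sum.inl_injective heq]
  · exact absurd heq (map_inl_ne_map_inr _ _)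

lemma preimage_inr_subset {T : Set (Sym2 (V₁ ⊕ V₂))} (hT : T ⊆ (G₁.disjUnion G₂).edgeSet) :
    Sym2.map Sum.inr ⁻¹' T ⊆ G₂.edgeSet := by
  intro e₂ he
  rcases disjUnion_edge_cases (hT he) with ⟨e₁, _, heq⟩ | ⟨e₂', h₂, heq⟩
  · exact absurd heq.symm (map_inl_ne_map_inr _ _)
  · rwa [Sym2.map.injective Sum.inr_injective heq]

lemma subset_decomp {T : Set (Sym2 (V₁ ⊕ V₂))} (hT : T ⊆ (G₁.disjUnion G₂).edgeSet) :
    T = Sym2.map Sum.inl '' (Sym2.map Sum.inl ⁻¹' T)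
      ∪ Sym2.map Sum.inr '' (Sym2.map Sum.inr ⁻¹' T) := by
  apply Set.Subset.antisymm
  · intro e he
    rcases disjUnion_edge_cases (hT he) with ⟨e₁, _, heq⟩ | ⟨e₂, _, heq⟩
    · exact Or.inl ⟨e₁, show Sym2.map Sum.inl e₁ ∈ T from heq ▸ he, heq.symm⟩
    · exact Or.inr ⟨e₂, show Sym2.map Sum.inr e₂ ∈ T from heq ▸ he, heq.symm⟩
  · rintro e (⟨e₁, h₁, rfl⟩ | ⟨e₂, h₂, rfl⟩)
    · exact h₁
    · exact h₂

lemma preimage_inl_union_images (T₁ : Set (Sym2 V₁)) (T₂ : Set (Sym2 V₂)) :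
    Sym2.map (Sum.inl : V₁ → V₁ ⊕ V₂) ⁻¹' (Sym2.map Sum.inl '' T₁ ∪ Sym2.map Sum.inr '' T₂)
      = T₁ := by
  ext e
  simp only [Set.mem_preimage, Set.mem_union, Set.mem_image]
  constructor
  · rintro (⟨e', he', heq⟩ | ⟨e', he', heq⟩)
    · rwa [← Sym2.map.injective Sum.inl_injective heq]
    · exact absurd heq.symm (map_inl_ne_map_inr _ _)
  · intro h
    exact Or.inl ⟨e, h, rfl⟩

lemma preimage_inr_union_images (T₁ : Set (Sym2 V₁)) (T₂ : Set (Sym2 V₂)) :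
    Sym2.map (Sum.inr : V₂ → V₁ ⊕ V₂) ⁻¹' (Sym2.map Sum.inl '' T₁ ∪ Sym2.map Sum.inr '' T₂)
      = T₂ := by
  ext e
  simp only [Set.mem_preimage, Set.mem_union, Set.mem_image]
  constructor
  · rintro (⟨e', he', heq⟩ | ⟨e', he', heq⟩)
    · exact absurd heq (map_inl_ne_map_inr _ _)
    · rwa [← Sym2.map.injective Sum.inr_injective heq]
  · intro h
    exact Or.inr ⟨e, h, rfl⟩

lemma union_images_subset {T₁ : Set (Sym2 V₁)} {T₂ : Set (Sym2 V₂)}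
    (h₁ : T₁ ⊆ G₁.edgeSet) (h₂ : T₂ ⊆ G₂.edgeSet) :
    Sym2.map Sum.inl '' T₁ ∪ Sym2.map Sum.inr '' T₂ ⊆ (G₁.disjUnion G₂).edgeSet := by
  rintro e (⟨e₁, he₁, rfl⟩ | ⟨e₂, he₂, rfl⟩)
  · induction e₁ using Sym2.ind with
    | _ a b => exact Or.inl ⟨a, b, rfl, rfl, (mem_edgeSet _).1 (h₁ he₁)⟩
  · induction e₂ using Sym2.ind with
    | _ a b => exact Or.inr ⟨a, b, rfl, rfl, (mem_edgeSet _).1 (h₂ he₂)⟩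

/-- Direction B: union of spanning forests is a spanning forest of the disjoint union. -/
lemma IsSpanningForest.disjUnion_of {T₁ : Set (Sym2 V₁)} {T₂ : Set (Sym2 V₂)}
    (h₁ : G₁.IsSpanningForest T₁) (h₂ : G₂.IsSpanningForest T₂) :
    (G₁.disjUnion G₂).IsSpanningForest (Sym2.map Sum.inl '' T₁ ∪ Sym2.map Sum.inr '' T₂) := by
  refine ⟨union_images_subset h₁.1 h₂.1, ?_, ?_⟩
  · rw [fromEdgeSet_union_images, sum_isAcyclic_iff]
    exact ⟨h₁.2.1, h₂.2.1⟩
  · intro T' hsub hsub' hacy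
    have hdec := subset_decomp hsub'
    set T₁' := Sym2.map (Sum.inl : V₁ → V₁ ⊕ V₂) ⁻¹' T' with hT₁'
    set T₂' := Sym2.map (Sum.inr : V₂ → V₁ ⊕ V₂) ⁻¹' T' with hT₂'
    have hacy' : (fromEdgeSet T₁').IsAcyclic ∧ (fromEdgeSet T₂').IsAcyclic := by
      rw [← sum_isAcyclic_iff, ← fromEdgeSet_union_images, ← hdec]
      exact hacy
    have hsub₁ : T₁ ⊆ T₁' := by
      intro e he
      exact hsub (Or.inl ⟨e, he, rfl⟩)
    have hsub₂ : T₂ ⊆ T₂' := by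
      intro e he
      exact hsub (Or.inr ⟨e, he, rfl⟩)
    have he₁ : T₁' = T₁ := h₁.2.2 _ hsub₁ (preimage_inl_subset hsub') hacy'.1
    have he₂ : T₂' = T₂ := h₂.2.2 _ hsub₂ (preimage_inr_subset hsub') hacy'.2
    rw [hdec, he₁, he₂]

/-- Direction A: a spanning forest of the disjoint union restricts to spanning forests. -/
lemma IsSpanningForest.disjUnion_parts {T : Set (Sym2 (V₁ ⊕ V₂))}
    (hT : (G₁.disjUnion G₂).IsSpanningForest T) :
    G₁.IsSpanningForest (Sym2.map Sum.inl ⁻¹' T) ∧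
    G₂.IsSpanningForest (Sym2.map Sum.inr ⁻¹' T) := by
  have hdec := subset_decomp hT.1
  have hacy : (fromEdgeSet (Sym2.map Sum.inl ⁻¹' T)).IsAcyclic ∧
      (fromEdgeSet (Sym2.map Sum.inr ⁻¹' T)).IsAcyclic := by
    rw [← sum_isAcyclic_iff, ← fromEdgeSet_union_images, ← hdec]
    exact hT.2.1
  constructor
  · refine ⟨preimage_inl_subset hT.1, hacy.1, ?_⟩
    intro T₁' hsub hsub' hacy'
    set T' := Sym2.map Sum.inl '' T₁' ∪ Sym2.map Sum.inr '' (Sym2.map Sum.inr ⁻¹' T) with hT'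
    have hTsub : T ⊆ T' := by
      rw [hdec]
      refine Set.union_subset_union_left _ (Set.image_mono hsub)
    have hT'sub : T' ⊆ (G₁.disjUnion G₂).edgeSet :=
      union_images_subset hsub' (preimage_inr_subset hT.1)
    have hT'acy : (fromEdgeSet T').IsAcyclic := by
      rw [hT', fromEdgeSet_union_images, sum_isAcyclic_iff]
      exact ⟨hacy', hacy.2⟩
    have := hT.2.2 T' hTsub hT'sub hT'acy
    calc T₁' = Sym2.map (Sum.inl : V₁ → V₁ ⊕ V₂) ⁻¹' T' := (preimage_inl_union_images _ _).symm
      _ = Sym2.map Sum.inl ⁻¹' T := by rw [this]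
  · refine ⟨preimage_inr_subset hT.1, hacy.2, ?_⟩
    intro T₂' hsub hsub' hacy'
    set T' := Sym2.map Sum.inl '' (Sym2.map Sum.inl ⁻¹' T) ∪ Sym2.map Sum.inr '' T₂' with hT'
    have hTsub : T ⊆ T' := by
      rw [hdec]
      refine Set.union_subset_union_right _ (Set.image_mono hsub)
    have hT'sub : T' ⊆ (G₁.disjUnion G₂).edgeSet :=
      union_images_subset (preimage_inl_subset hT.1) hsub'
    have hT'acy : (fromEdgeSet T').IsAcyclic := by
      rw [hT', fromEdgeSet_union_images, sum_isAcyclic_iff]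
      exact ⟨hacy.1, hacy'⟩
    have := hT.2.2 T' hTsub hT'sub hT'acy
    calc T₂' = Sym2.map (Sum.inr : V₂ → V₁ ⊕ V₂) ⁻¹' T' := (preimage_inr_union_images _ _).symm
      _ = Sym2.map Sum.inr ⁻¹' T := by rw [this]


end DisjUnion


section DisjUnionKirchhoff
variable {V₁ V₂ : Type*} (G₁ : SimpleGraph V₁) (G₂ : SimpleGraph V₂)

/-- The canonical equivalence `E(G₁) ⊕ E(G₂) ≃ E(G₁ ⊔ G₂)`. -/
def edgeSum : (G₁.edgeSet ⊕ G₂.edgeSet) ≃ (G₁.disjUnion G₂).edgeSet :=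
  Equiv.ofBijective (Sum.elim (G₁.disjUnionEdgeInl G₂) (G₁.disjUnionEdgeInr G₂)) (by
    constructor
    · rintro (e₁ | e₁) (e₂ | e₂) h <;>
        simp only [Sum.elim_inl, Sum.elim_inr, disjUnionEdgeInl, disjUnionEdgeInr,
          Subtype.mk.injEq] at h
      · exact congrArg Sum.inl (Subtype.ext (Sym2.map.injective Sum.inl_injective h))
      · exact absurd h (map_inl_ne_map_inr _ _)
      · exact absurd h.symm (map_inl_ne_map_inr _ _)
      · exact congrArg Sum.inr (Subtype.ext (Sym2.map.injective Sum.inr_injective h))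
    · rintro ⟨e, he⟩
      rcases disjUnion_edge_cases he with ⟨e₁, h₁, heq⟩ | ⟨e₂, h₂, heq⟩
      · exact ⟨Sum.inl ⟨e₁, h₁⟩, Subtype.ext heq.symm⟩
      · exact ⟨Sum.inr ⟨e₂, h₂⟩, Subtype.ext heq.symm⟩)

@[simp] lemma edgeSum_inl (e : G₁.edgeSet) :
    edgeSum G₁ G₂ (Sum.inl e) = G₁.disjUnionEdgeInl G₂ e := rfl

@[simp] lemma edgeSum_inr (e : G₂.edgeSet) :
    edgeSum G₁ G₂ (Sum.inr e) = G₁.disjUnionEdgeInr G₂ e := rfl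

variable [Fintype V₁] [Fintype V₂] {k : Type*} [CommRing k]

lemma aeval_kirchhoff_disjUnion (t : (G₁.disjUnion G₂).edgeSet → k) :
    MvPolynomial.aeval t (G₁.disjUnion G₂).kirchhoff =
      MvPolynomial.aeval (t ∘ G₁.disjUnionEdgeInl G₂) G₁.kirchhoff *
      MvPolynomial.aeval (t ∘ G₁.disjUnionEdgeInr G₂) G₂.kirchhoff := by
  rw [aeval_kirchhoff_eq, aeval_kirchhoff_eq, aeval_kirchhoff_eq, Finset.sum_mul_sum,
    ← Finset.sum_product']
  refine (Finset.sum_bij'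
    (i := fun T _ => (T.preimage (Sym2.map Sum.inl) ((Sym2.map.injective Sum.inl_injective).injOn),
      T.preimage (Sym2.map Sum.inr) ((Sym2.map.injective Sum.inr_injective).injOn)))
    (j := fun P _ => P.1.map ⟨Sym2.map Sum.inl, Sym2.map.injective Sum.inl_injective⟩
      ∪ P.2.map ⟨Sym2.map Sum.inr, Sym2.map.injective Sum.inr_injective⟩)
    ?_ ?_ ?_ ?_ ?_)
  · -- hi
    intro T hT
    rw [Finset.mem_filter] at hT
    rw [Finset.mem_product]
    constructor <;> rw [Finset.mem_filter]
    · exact ⟨Finset.mem_univ _, by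
        rw [Finset.coe_preimage]
        exact hT.2.disjUnion_parts.1⟩
    · exact ⟨Finset.mem_univ _, by
        rw [Finset.coe_preimage]
        exact hT.2.disjUnion_parts.2⟩
  · -- hj
    intro P hP
    rw [Finset.mem_product, Finset.mem_filter, Finset.mem_filter] at hP
    rw [Finset.mem_filter]
    refine ⟨Finset.mem_univ _, ?_⟩
    have : ((P.1.map ⟨Sym2.map Sum.inl, Sym2.map.injective Sum.inl_injective⟩
        ∪ P.2.map ⟨Sym2.map Sum.inr, Sym2.map.injective Sum.inr_injective⟩ :
        Finset (Sym2 (V₁ ⊕ V₂))) : Set (Sym2 (V₁ ⊕ V₂)))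
        = Sym2.map Sum.inl '' ↑P.1 ∪ Sym2.map Sum.inr '' ↑P.2 := by
      simp [Finset.coe_union, Finset.coe_map]
    rw [this]
    exact hP.1.2.disjUnion_of hP.2.2
  · -- left inverse
    intro T hT
    rw [Finset.mem_filter] at hT
    apply Finset.coe_injective
    rw [Finset.coe_union, Finset.coe_map, Finset.coe_map, Finset.coe_preimage,
      Finset.coe_preimage]
    exact (subset_decomp hT.2.1).symm
  · -- right inverse
    intro P hP
    have hco : ((P.1.map ⟨Sym2.map Sum.inl, Sym2.map.injective Sum.inl_injective⟩
        ∪ P.2.map ⟨Sym2.map Sum.inr, Sym2.map.injective Sum.inr_injective⟩ :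
        Finset (Sym2 (V₁ ⊕ V₂))) : Set (Sym2 (V₁ ⊕ V₂)))
        = Sym2.map Sum.inl '' ↑P.1 ∪ Sym2.map Sum.inr '' ↑P.2 := by
      simp [Finset.coe_union, Finset.coe_map]
    ext e
    · rw [Finset.mem_preimage, ← Finset.mem_coe, hco]
      rw [← Set.mem_preimage, preimage_inl_union_images]
      exact Finset.mem_coe
    · rw [Finset.mem_preimage, ← Finset.mem_coe, hco]
      rw [← Set.mem_preimage, preimage_inr_union_images]
      exact Finset.mem_coe
  · -- values
    intro T hT
    rw [Finset.prod_filter, ← Equiv.prod_comp (edgeSum G₁ G₂), Fintype.prod_sum_type]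
    congr 1
    · rw [Finset.prod_filter]
      refine Finset.prod_congr rfl (fun e _ => ?_)
      simp only [edgeSum_inl, Finset.mem_preimage]
      congr 1
    · rw [Finset.prod_filter]
      refine Finset.prod_congr rfl (fun e _ => ?_)
      simp only [edgeSum_inr, Finset.mem_preimage]
      congr 1

end DisjUnionKirchhoff


section Final
variable {V₁ V₂ : Type*} [Fintype V₁] [Fintype V₂]
  {G₁ : SimpleGraph V₁} {G₂ : SimpleGraph V₂} {k : Type*} [Field k]

lemma units_smul_right_cancel {ι : Type*} {v : ι → k} (hv : v ≠ 0) {u u' : kˣ}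
    (h : (u : k) • v = (u' : k) • v) : u = u' := by
  obtain ⟨e, he⟩ := Function.ne_iff.1 hv
  have h2 := congrFun h e
  simp only [Pi.smul_apply, smul_eq_mul] at h2
  exact Units.ext (mul_right_cancel₀ (by simpa using he) h2)

lemma mem_projComplement_mk {V : Type*} [Fintype V] {G : SimpleGraph V}
    {v : G.edgeSet → k} (hv : v ≠ 0) (h : MvPolynomial.aeval v G.kirchhoff ≠ 0) :
    Projectivization.mk k v hv ∈ G.projHypersurfaceComplement k := by
  obtain ⟨c, hc⟩ := Projectivization.exists_smul_eq_mk_rep k v hv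
  show MvPolynomial.aeval (Projectivization.mk k v hv).rep G.kirchhoff ≠ 0
  rw [← hc, Units.smul_def, aeval_kirchhoff_smul]
  exact mul_ne_zero (pow_ne_zero _ c.ne_zero) h

lemma parts_of_ne (h₁ : ¬ G₁.IsAcyclic) (h₂ : ¬ G₂.IsAcyclic)
    (t : (G₁.disjUnion G₂).edgeSet → k)
    (ht : MvPolynomial.aeval t (G₁.disjUnion G₂).kirchhoff ≠ 0) :
    (t ∘ G₁.disjUnionEdgeInl G₂ ≠ 0 ∧
      MvPolynomial.aeval (t ∘ G₁.disjUnionEdgeInl G₂) G₁.kirchhoff ≠ 0) ∧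
    (t ∘ G₁.disjUnionEdgeInr G₂ ≠ 0 ∧
      MvPolynomial.aeval (t ∘ G₁.disjUnionEdgeInr G₂) G₂.kirchhoff ≠ 0) := by
  rw [aeval_kirchhoff_disjUnion] at ht
  have hl := left_ne_zero_of_mul ht
  have hr := right_ne_zero_of_mul ht
  refine ⟨⟨?_, hl⟩, ?_, hr⟩
  · intro h0
    rw [h0] at hl
    exact hl (aeval_kirchhoff_zero_of_not_isAcyclic h₁)
  · intro h0
    rw [h0] at hr
    exact hr (aeval_kirchhoff_zero_of_not_isAcyclic h₂)

lemma glue_comp_inl (a : G₁.edgeSet → k) (b : G₂.edgeSet → k) :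
    (fun e => Sum.elim a b ((edgeSum G₁ G₂).symm e)) ∘ G₁.disjUnionEdgeInl G₂ = a := by
  funext e
  show Sum.elim a b ((edgeSum G₁ G₂).symm (edgeSum G₁ G₂ (Sum.inl e))) = a e
  rw [Equiv.symm_apply_apply, Sum.elim_inl]

lemma glue_comp_inr (a : G₁.edgeSet → k) (b : G₂.edgeSet → k) :
    (fun e => Sum.elim a b ((edgeSum G₁ G₂).symm e)) ∘ G₁.disjUnionEdgeInr G₂ = b := by
  funext e
  show Sum.elim a b ((edgeSum G₁ G₂).symm (edgeSum G₁ G₂ (Sum.inr e))) = b e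
  rw [Equiv.symm_apply_apply, Sum.elim_inr]

lemma glue_exists (a : G₁.edgeSet → k) (b : G₂.edgeSet → k)
    (ha : MvPolynomial.aeval a G₁.kirchhoff ≠ 0)
    (hb : MvPolynomial.aeval b G₂.kirchhoff ≠ 0) :
    ∃ t : (G₁.disjUnion G₂).edgeSet → k,
      t ∘ G₁.disjUnionEdgeInl G₂ = a ∧ t ∘ G₁.disjUnionEdgeInr G₂ = b ∧
      MvPolynomial.aeval t (G₁.disjUnion G₂).kirchhoff ≠ 0 := by
  refine ⟨fun e => Sum.elim a b ((edgeSum G₁ G₂).symm e),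
    glue_comp_inl a b, glue_comp_inr a b, ?_⟩
  rw [aeval_kirchhoff_disjUnion, glue_comp_inl, glue_comp_inr]
  exact mul_ne_zero ha hb

end Final

end SimpleGraph

/-- Let `G = G₁ ⊔ G₂` with neither `G₁` nor `G₂` acyclic. (a) For every
`t` with `Ψ_G(t) ≠ 0`, the two components `t₁ = t ∘ inl`, `t₂ = t ∘ inr` are nonzero, so
`[t] ↦ ([t₁], [t₂])` defines a map `ℙ(k^{E(G)}) ∖ X_G → (ℙ(k^{E(G₁)}) ∖ X_{G₁}) ×
(ℙ(k^{E(G₂)}) ∖ X_{G₂})`; (b) this map is surjective and each fiber is in bijection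
with `kˣ`. -/
theorem projective_complement_disjUnion_torus_bundle {V₁ V₂ : Type*}
    [Fintype V₁] [Fintype V₂] (G₁ : SimpleGraph V₁) (G₂ : SimpleGraph V₂)
    (h₁ : ¬ G₁.IsAcyclic) (h₂ : ¬ G₂.IsAcyclic) (k : Type*) [Field k] :
    (∀ t : (G₁.disjUnion G₂).edgeSet → k,
        (MvPolynomial.aeval t) (G₁.disjUnion G₂).kirchhoff ≠ 0 →
          t ∘ G₁.disjUnionEdgeInl G₂ ≠ 0 ∧ t ∘ G₁.disjUnionEdgeInr G₂ ≠ 0) ∧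
    ∃ φ : ((G₁.disjUnion G₂).projHypersurfaceComplement k) →
          (G₁.projHypersurfaceComplement k) × (G₂.projHypersurfaceComplement k),
      (∀ p, ∃ c₁ c₂ : kˣ,
          (↑((φ p).1) : Projectivization k (G₁.edgeSet → k)).rep =
            (c₁ : k) • ((↑p : Projectivization k ((G₁.disjUnion G₂).edgeSet → k)).rep ∘
              G₁.disjUnionEdgeInl G₂) ∧
          (↑((φ p).2) : Projectivization k (G₂.edgeSet → k)).rep =
            (c₂ : k) • ((↑p : Projectivization k ((G₁.disjUnion G₂).edgeSet → k)).rep ∘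
              G₁.disjUnionEdgeInr G₂)) ∧
      Function.Surjective φ ∧
      ∀ y, Nonempty ((φ ⁻¹' {y}) ≃ kˣ) := by
  classical
  have hparts := SimpleGraph.parts_of_ne (G₁ := G₁) (G₂ := G₂) (k := k) h₁ h₂
  refine ⟨fun t ht => ⟨(hparts t ht).1.1, (hparts t ht).2.1⟩, ?_⟩
  set φ : ((G₁.disjUnion G₂).projHypersurfaceComplement k) →
      (G₁.projHypersurfaceComplement k) × (G₂.projHypersurfaceComplement k) :=
    fun p => (⟨Projectivization.mk k (p.1.rep ∘ G₁.disjUnionEdgeInl G₂)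
                  (hparts p.1.rep p.2).1.1,
               SimpleGraph.mem_projComplement_mk (hparts p.1.rep p.2).1.1
                  (hparts p.1.rep p.2).1.2⟩,
              ⟨Projectivization.mk k (p.1.rep ∘ G₁.disjUnionEdgeInr G₂)
                  (hparts p.1.rep p.2).2.1,
               SimpleGraph.mem_projComplement_mk (hparts p.1.rep p.2).2.1
                  (hparts p.1.rep p.2).2.2⟩) with hφdef
  have hφ1 : ∀ p, ((φ p).1 : Projectivization k (G₁.edgeSet → k))
      = Projectivization.mk k (p.1.rep ∘ G₁.disjUnionEdgeInl G₂) (hparts p.1.rep p.2).1.1 :=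
    fun p => rfl
  have hφ2 : ∀ p, ((φ p).2 : Projectivization k (G₂.edgeSet → k))
      = Projectivization.mk k (p.1.rep ∘ G₁.disjUnionEdgeInr G₂) (hparts p.1.rep p.2).2.1 :=
    fun p => rfl
  refine ⟨φ, ?_, ?_, ?_⟩
  · -- scaling property of φ
    intro p
    obtain ⟨c₁, hc₁⟩ := Projectivization.exists_smul_eq_mk_rep k
      (p.1.rep ∘ G₁.disjUnionEdgeInl G₂) (hparts p.1.rep p.2).1.1
    obtain ⟨c₂, hc₂⟩ := Projectivization.exists_smul_eq_mk_rep k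
      (p.1.rep ∘ G₁.disjUnionEdgeInr G₂) (hparts p.1.rep p.2).2.1
    refine ⟨c₁, c₂, ?_, ?_⟩
    · rw [hφ1 p, ← hc₁, Units.smul_def]
    · rw [hφ2 p, ← hc₂, Units.smul_def]
  · -- surjectivity
    rintro ⟨⟨q₁, hq₁⟩, ⟨q₂, hq₂⟩⟩
    obtain ⟨t, htl, htr, htne⟩ := SimpleGraph.glue_exists q₁.rep q₂.rep hq₁ hq₂
    have ht0 : t ≠ 0 := by
      intro h0
      apply q₁.rep_nonzero
      rw [← htl, h0]
      rfl
    refine ⟨⟨Projectivization.mk k t ht0, SimpleGraph.mem_projComplement_mk ht0 htne⟩, ?_⟩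
    obtain ⟨μ, hμ⟩ := Projectivization.exists_smul_eq_mk_rep k t ht0
    set p : ((G₁.disjUnion G₂).projHypersurfaceComplement k) :=
      ⟨Projectivization.mk k t ht0, SimpleGraph.mem_projComplement_mk ht0 htne⟩ with hpdef
    have hrepl : p.1.rep ∘ G₁.disjUnionEdgeInl G₂ = (μ : k) • q₁.rep := by
      funext e
      calc p.1.rep (G₁.disjUnionEdgeInl G₂ e)
          = (μ • t) (G₁.disjUnionEdgeInl G₂ e) := by rw [hμ]
        _ = (μ : k) * (t ∘ G₁.disjUnionEdgeInl G₂) e := rfl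
        _ = (μ : k) * q₁.rep e := by rw [htl]
        _ = ((μ : k) • q₁.rep) e := rfl
    have hrepr : p.1.rep ∘ G₁.disjUnionEdgeInr G₂ = (μ : k) • q₂.rep := by
      funext e
      calc p.1.rep (G₁.disjUnionEdgeInr G₂ e)
          = (μ • t) (G₁.disjUnionEdgeInr G₂ e) := by rw [hμ]
        _ = (μ : k) * (t ∘ G₁.disjUnionEdgeInr G₂) e := rfl
        _ = (μ : k) * q₂.rep e := by rw [htr]
        _ = ((μ : k) • q₂.rep) e := rfl
    have h1 : ((φ p).1 : Projectivization k (G₁.edgeSet → k)) = q₁ := by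
      rw [hφ1 p]
      conv_rhs => rw [← Projectivization.mk_rep q₁]
      rw [Projectivization.mk_eq_mk_iff]
      exact ⟨μ, by rw [Units.smul_def, ← hrepl]⟩
    have h2 : ((φ p).2 : Projectivization k (G₂.edgeSet → k)) = q₂ := by
      rw [hφ2 p]
      conv_rhs => rw [← Projectivization.mk_rep q₂]
      rw [Projectivization.mk_eq_mk_iff]
      exact ⟨μ, by rw [Units.smul_def, ← hrepr]⟩
    exact Prod.ext (Subtype.ext h1) (Subtype.ext h2)
  · -- fibers
    rintro ⟨⟨q₁, hq₁⟩, ⟨q₂, hq₂⟩⟩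
    set y : (G₁.projHypersurfaceComplement k) × (G₂.projHypersurfaceComplement k) :=
      (⟨q₁, hq₁⟩, ⟨q₂, hq₂⟩) with hydef
    have hspec : ∀ r : ↥(φ ⁻¹' {y}),
        ∃ u₁ u₂ : kˣ, (u₁ : k) • q₁.rep = r.1.1.rep ∘ G₁.disjUnionEdgeInl G₂ ∧
          (u₂ : k) • q₂.rep = r.1.1.rep ∘ G₁.disjUnionEdgeInr G₂ := by
      rintro ⟨p, hp⟩
      simp only [Set.mem_preimage, Set.mem_singleton_iff] at hp
      have h1 : ((φ p).1 : Projectivization k (G₁.edgeSet → k)) = q₁ :=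
        congrArg (fun z => z.1.1) hp
      have h2 : ((φ p).2 : Projectivization k (G₂.edgeSet → k)) = q₂ :=
        congrArg (fun z => z.2.1) hp
      rw [hφ1 p] at h1
      rw [hφ2 p] at h2
      conv_rhs at h1 => rw [← Projectivization.mk_rep q₁]
      conv_rhs at h2 => rw [← Projectivization.mk_rep q₂]
      rw [Projectivization.mk_eq_mk_iff] at h1 h2
      obtain ⟨u₁, hu₁⟩ := h1
      obtain ⟨u₂, hu₂⟩ := h2
      exact ⟨u₁, u₂, (Units.smul_def u₁ q₁.rep).symm.trans hu₁,
        (Units.smul_def u₂ q₂.rep).symm.trans hu₂⟩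
    choose u₁ u₂ hu₁ hu₂ using hspec
    set F : ↥(φ ⁻¹' {y}) → kˣ := fun r => u₂ r * (u₁ r)⁻¹ with hFdef
    have hF_inj : Function.Injective F := by
      intro r r' hF
      have hratio : (u₁ r' * (u₁ r)⁻¹) * u₂ r = u₂ r' := by
        have h0 : u₂ r * (u₁ r)⁻¹ = u₂ r' * (u₁ r')⁻¹ := hF
        calc (u₁ r' * (u₁ r)⁻¹) * u₂ r
            = u₁ r' * ((u₁ r)⁻¹ * u₂ r) := mul_assoc _ _ _
          _ = u₁ r' * (u₂ r * (u₁ r)⁻¹) := by rw [mul_comm ((u₁ r)⁻¹) (u₂ r)]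
          _ = u₁ r' * (u₂ r' * (u₁ r')⁻¹) := by rw [h0]
          _ = (u₂ r' * (u₁ r')⁻¹) * u₁ r' := mul_comm _ _
          _ = u₂ r' * ((u₁ r')⁻¹ * u₁ r') := mul_assoc _ _ _
          _ = u₂ r' := by rw [inv_mul_cancel, mul_one]
      have hrep : r'.1.1.rep = ((u₁ r' * (u₁ r)⁻¹ : kˣ) : k) • r.1.1.rep := by
        funext e
        obtain ⟨x, rfl⟩ := (SimpleGraph.edgeSum G₁ G₂).surjective e
        cases x with
        | inl e₁ =>
          have hA := congrFun (hu₁ r) e₁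
          have hB := congrFun (hu₁ r') e₁
          simp only [Pi.smul_apply, smul_eq_mul] at hA hB ⊢
          show r'.1.1.rep (G₁.disjUnionEdgeInl G₂ e₁)
            = ((u₁ r' * (u₁ r)⁻¹ : kˣ) : k) * r.1.1.rep (G₁.disjUnionEdgeInl G₂ e₁)
          rw [show r.1.1.rep (G₁.disjUnionEdgeInl G₂ e₁)
              = (r.1.1.rep ∘ G₁.disjUnionEdgeInl G₂) e₁ from rfl, ← hA,
            show r'.1.1.rep (G₁.disjUnionEdgeInl G₂ e₁)
              = (r'.1.1.rep ∘ G₁.disjUnionEdgeInl G₂) e₁ from rfl, ← hB]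
          push_cast
          field_simp
        | inr e₂ =>
          have hA := congrFun (hu₂ r) e₂
          have hB := congrFun (hu₂ r') e₂
          simp only [Pi.smul_apply, smul_eq_mul] at hA hB ⊢
          show r'.1.1.rep (G₁.disjUnionEdgeInr G₂ e₂)
            = ((u₁ r' * (u₁ r)⁻¹ : kˣ) : k) * r.1.1.rep (G₁.disjUnionEdgeInr G₂ e₂)
          rw [show r.1.1.rep (G₁.disjUnionEdgeInr G₂ e₂)
              = (r.1.1.rep ∘ G₁.disjUnionEdgeInr G₂) e₂ from rfl, ← hA,
            show r'.1.1.rep (G₁.disjUnionEdgeInr G₂ e₂)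
              = (r'.1.1.rep ∘ G₁.disjUnionEdgeInr G₂) e₂ from rfl, ← hB]
          have := congrArg (fun u : kˣ => (u : k)) hratio
          push_cast at this
          calc (u₂ r' : k) * q₂.rep e₂
              = ((u₁ r' : k) * ((u₁ r : k))⁻¹ * (u₂ r : k)) * q₂.rep e₂ := by rw [this]
            _ = ((u₁ r' * (u₁ r)⁻¹ : kˣ) : k) * ((u₂ r : k) * q₂.rep e₂) := by
                push_cast; ring
      have hpt : r'.1.1 = r.1.1 := by
        rw [← Projectivization.mk_rep r'.1.1, ← Projectivization.mk_rep r.1.1,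
          Projectivization.mk_eq_mk_iff]
        exact ⟨u₁ r' * (u₁ r)⁻¹, by rw [Units.smul_def]; exact hrep.symm⟩
      exact Subtype.ext (Subtype.ext hpt.symm)
    have hF_surj : Function.Surjective F := by
      intro c
      have hb' : MvPolynomial.aeval ((c : k) • q₂.rep) G₂.kirchhoff ≠ 0 := by
        rw [SimpleGraph.aeval_kirchhoff_smul]
        exact mul_ne_zero (pow_ne_zero _ c.ne_zero) hq₂
      obtain ⟨t, htl, htr, htne⟩ := SimpleGraph.glue_exists q₁.rep ((c : k) • q₂.rep) hq₁ hb'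
      have ht0 : t ≠ 0 := by
        intro h0
        apply q₁.rep_nonzero
        rw [← htl, h0]
        rfl
      set p : ((G₁.disjUnion G₂).projHypersurfaceComplement k) :=
        ⟨Projectivization.mk k t ht0, SimpleGraph.mem_projComplement_mk ht0 htne⟩ with hpdef
      obtain ⟨μ, hμ⟩ := Projectivization.exists_smul_eq_mk_rep k t ht0
      have hrepl : p.1.rep ∘ G₁.disjUnionEdgeInl G₂ = (μ : k) • q₁.rep := by
        funext e
        calc p.1.rep (G₁.disjUnionEdgeInl G₂ e)
            = (μ • t) (G₁.disjUnionEdgeInl G₂ e) := by rw [hμ]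
          _ = (μ : k) * (t ∘ G₁.disjUnionEdgeInl G₂) e := rfl
          _ = (μ : k) * q₁.rep e := by rw [htl]
          _ = ((μ : k) • q₁.rep) e := rfl
      have hrepr : p.1.rep ∘ G₁.disjUnionEdgeInr G₂ = ((μ * c : kˣ) : k) • q₂.rep := by
        funext e
        calc p.1.rep (G₁.disjUnionEdgeInr G₂ e)
            = (μ • t) (G₁.disjUnionEdgeInr G₂ e) := by rw [hμ]
          _ = (μ : k) * (t ∘ G₁.disjUnionEdgeInr G₂) e := rfl
          _ = (μ : k) * ((c : k) * q₂.rep e) := by rw [htr]; rfl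
          _ = (((μ * c : kˣ) : k) • q₂.rep) e := by push_cast; simp [mul_assoc]
      have hmem : p ∈ φ ⁻¹' {y} := by
        simp only [Set.mem_preimage, Set.mem_singleton_iff]
        have h1 : ((φ p).1 : Projectivization k (G₁.edgeSet → k)) = q₁ := by
          rw [hφ1 p]
          conv_rhs => rw [← Projectivization.mk_rep q₁]
          rw [Projectivization.mk_eq_mk_iff]
          exact ⟨μ, by rw [Units.smul_def, ← hrepl]⟩
        have h2 : ((φ p).2 : Projectivization k (G₂.edgeSet → k)) = q₂ := by
          rw [hφ2 p]
          conv_rhs => rw [← Projectivization.mk_rep q₂]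
          rw [Projectivization.mk_eq_mk_iff]
          exact ⟨μ * c, by rw [Units.smul_def, ← hrepr]⟩
        exact Prod.ext (Subtype.ext h1) (Subtype.ext h2)
      refine ⟨⟨p, hmem⟩, ?_⟩
      have he₁ : u₁ ⟨p, hmem⟩ = μ :=
        SimpleGraph.units_smul_right_cancel q₁.rep_nonzero
          ((hu₁ ⟨p, hmem⟩).trans hrepl)
      have he₂ : u₂ ⟨p, hmem⟩ = μ * c :=
        SimpleGraph.units_smul_right_cancel q₂.rep_nonzero
          ((hu₂ ⟨p, hmem⟩).trans hrepr)
      show u₂ ⟨p, hmem⟩ * (u₁ ⟨p, hmem⟩)⁻¹ = c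
      rw [he₁, he₂, mul_comm μ c, mul_inv_cancel_right]
    exact ⟨Equiv.ofBijective F ⟨hF_inj, hF_surj⟩⟩
end
end

section
/- Let G be a finite simple graph and let e ∈ E(G) be a bridge of G (an edge whose deletion increases the number of connected components; equivalently, an edge lying on no cycle). Then: (a) every spanning forest of G contains e; (b) the polynomial Ψ_G does not involve the variable x_e, and Ψ_G equals the image of Ψ_{G'} under the variable renaming induced by the inclusion E(G') = E(G) ∖ {e} ↪ E(G), where G' is the graph G with the edge e deleted; and (c) for any field k there is a bijection k^{E(G)} ∖ X̂_G ≃ k × (k^{E(G')} ∖ X̂_{G'}). (This is the statement that for a graph Γ that is not 1PI, the universal invariant has the form U(Γ) = [𝔸¹]·B.) -/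
open scoped Classical
noncomputable section

open MvPolynomial

/-- The canonical inclusion `E(G ∖ s) → E(G)` of the edge set of the graph with the
edges in `s` deleted. -/
def SimpleGraph.deleteEdgesInc {V : Type*} (G : SimpleGraph V) (s : Set (Sym2 V)) :
    (G.deleteEdges s).edgeSet → G.edgeSet :=
  fun f => ⟨(f : Sym2 V),
    SimpleGraph.edgeSet_mono (SimpleGraph.deleteEdges_le s) f.2⟩

private lemma mem_del {V : Type*} {G : SimpleGraph V} {s : Set (Sym2 V)} {f : Sym2 V}
    (h : f ∈ (G.deleteEdges s).edgeSet) : f ∈ G.edgeSet ∧ f ∉ s := by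
  rwa [SimpleGraph.edgeSet_deleteEdges] at h

private lemma acyclic_anti {V : Type*} {H G : SimpleGraph V} (h : H ≤ G)
    (hG : G.IsAcyclic) : H.IsAcyclic :=
  fun _ p hp => hG (p.mapLe h) (hp.mapLe h)

private lemma acyclic_of_bridge {V : Type*} {G : SimpleGraph V} {e : Sym2 V}
    (he : e ∈ G.edgeSet ∧ G.IsBridge e) {s : Set (Sym2 V)} (hs : s ⊆ G.edgeSet)
    (hacy : (SimpleGraph.fromEdgeSet (s \ {e})).IsAcyclic) :
    (SimpleGraph.fromEdgeSet s).IsAcyclic := by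
  replace he : e ∈ G.edgeSet ∧ ∀ {u : V} (p : G.Walk u u), p.IsCycle → e ∉ p.edges :=
    ⟨he.1, fun _ hp => he.2.notMem_edges_of_isCycle hp⟩
  intro u p hp
  by_cases hmem : e ∈ p.edges
  · have hG : ∀ f ∈ p.edges, f ∈ G.edgeSet := by
      intro f hf
      have h1 := p.edges_subset_edgeSet hf
      rw [SimpleGraph.edgeSet_fromEdgeSet] at h1
      exact hs h1.1
    exact he.2 (p.transfer G hG) (hp.transfer hG)
      (by rwa [SimpleGraph.Walk.edges_transfer])
  · have h' : ∀ f ∈ p.edges, f ∈ (SimpleGraph.fromEdgeSet (s \ {e})).edgeSet := by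
      intro f hf
      have h1 := p.edges_subset_edgeSet hf
      rw [SimpleGraph.edgeSet_fromEdgeSet] at h1 ⊢
      exact ⟨⟨h1.1, fun h => hmem (Set.mem_singleton_iff.mp h ▸ hf)⟩, h1.2⟩
    exact hacy (p.transfer _ h') (hp.transfer h')

private lemma mem_forest {V : Type*} {G : SimpleGraph V} {e : Sym2 V} (he : e ∈ G.edgeSet ∧ G.IsBridge e)
    {T : Set (Sym2 V)} (hT : G.IsSpanningForest T) : e ∈ T := by
  by_contra hmem
  have h1 : insert e T ⊆ G.edgeSet := Set.insert_subset he.1 hT.1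
  have h2 : (SimpleGraph.fromEdgeSet (insert e T)).IsAcyclic := by
    refine acyclic_of_bridge he h1 (acyclic_anti (SimpleGraph.fromEdgeSet_mono ?_) hT.2.1)
    intro f hf
    exact hf.1.resolve_left fun h => hf.2 (Set.mem_singleton_iff.mpr h)
  have h3 := hT.2.2 (insert e T) (Set.subset_insert e T) h1 h2
  exact hmem (h3 ▸ Set.mem_insert e T)

private lemma forest_iff {V : Type*} {G : SimpleGraph V} {e : Sym2 V} (he : e ∈ G.edgeSet ∧ G.IsBridge e)
    (T : Set (Sym2 V)) :
    G.IsSpanningForest T ↔ e ∈ T ∧ (G.deleteEdges {e}).IsSpanningForest (T \ {e}) := by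
  constructor
  · intro hT
    have heT := mem_forest he hT
    refine ⟨heT, ?_, ?_, ?_⟩
    · intro f hf
      rw [SimpleGraph.edgeSet_deleteEdges]
      exact ⟨hT.1 hf.1, hf.2⟩
    · exact acyclic_anti (SimpleGraph.fromEdgeSet_mono Set.diff_subset) hT.2.1
    · intro T'' hsub hsub' hacy
      have hne : e ∉ T'' := fun h => by
        have := hsub' h
        rw [SimpleGraph.edgeSet_deleteEdges] at this
        exact this.2 rfl
      have h1 : insert e T'' ⊆ G.edgeSet := by
        refine Set.insert_subset he.1 fun f hf => ?_
        have := hsub' hf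
        rw [SimpleGraph.edgeSet_deleteEdges] at this
        exact this.1
      have h2 : (SimpleGraph.fromEdgeSet (insert e T'')).IsAcyclic := by
        refine acyclic_of_bridge he h1 (acyclic_anti (SimpleGraph.fromEdgeSet_mono ?_) hacy)
        intro f hf
        exact hf.1.resolve_left fun h => hf.2 (Set.mem_singleton_iff.mpr h)
      have h3 : T ⊆ insert e T'' := by
        intro f hf
        by_cases hfe : f = e
        · exact hfe ▸ Set.mem_insert e T''
        · exact Set.mem_insert_of_mem e (hsub ⟨hf, hfe⟩)
      have h4 := hT.2.2 (insert e T'') h3 h1 h2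
      rw [← h4, Set.insert_diff_self_of_notMem hne]
  · rintro ⟨heT, hT'⟩
    have hsubE : T ⊆ G.edgeSet := by
      intro f hf
      by_cases hfe : f = e
      · exact hfe ▸ he.1
      · have := hT'.1 ⟨hf, hfe⟩
        rw [SimpleGraph.edgeSet_deleteEdges] at this
        exact this.1
    refine ⟨hsubE, acyclic_of_bridge he hsubE hT'.2.1, ?_⟩
    intro T'' hsub hsub' hacy
    have h1 : T \ {e} ⊆ T'' \ {e} := Set.diff_subset_diff_left hsub
    have h2 : T'' \ {e} ⊆ (G.deleteEdges {e}).edgeSet := by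
      intro f hf
      rw [SimpleGraph.edgeSet_deleteEdges]
      exact ⟨hsub' hf.1, hf.2⟩
    have h3 : (SimpleGraph.fromEdgeSet (T'' \ {e})).IsAcyclic :=
      acyclic_anti (SimpleGraph.fromEdgeSet_mono Set.diff_subset) hacy
    have h4 := hT'.2.2 (T'' \ {e}) h1 h2 h3
    have h5 : e ∈ T'' := hsub heT
    calc T'' = insert e (T'' \ {e}) := by
            rw [Set.insert_diff_singleton, Set.insert_eq_self.mpr h5]
         _ = insert e (T \ {e}) := by rw [h4]
         _ = T := by rw [Set.insert_diff_singleton, Set.insert_eq_self.mpr heT]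

private lemma kirchhoff_rename {V : Type*} [Fintype V] (G : SimpleGraph V) (e : Sym2 V)
    (he : e ∈ G.edgeSet ∧ G.IsBridge e) :
    G.kirchhoff =
      MvPolynomial.rename (G.deleteEdgesInc {e}) (G.deleteEdges {e}).kirchhoff := by
  classical
  rw [SimpleGraph.kirchhoff, SimpleGraph.kirchhoff, map_sum]
  refine Finset.sum_bij' (fun T _ => T.erase e) (fun T' _ => insert e T') ?_ ?_ ?_ ?_ ?_
  · -- membership forward
    intro T hT
    rw [Finset.mem_filter] at hT ⊢
    refine ⟨Finset.mem_univ _, ?_⟩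
    have := (forest_iff he (↑T)).mp hT.2
    rw [Finset.coe_erase]
    exact this.2
  · -- membership backward
    intro T' hT'
    rw [Finset.mem_filter] at hT' ⊢
    refine ⟨Finset.mem_univ _, ?_⟩
    have hne : e ∉ (T' : Set (Sym2 V)) := fun h => (mem_del (hT'.2.1 h)).2 rfl
    rw [forest_iff he, Finset.coe_insert]
    refine ⟨Set.mem_insert e _, ?_⟩
    rw [Set.insert_diff_self_of_notMem hne]
    exact hT'.2
  · -- left inverse
    intro T hT
    rw [Finset.mem_filter] at hT
    have heT : e ∈ T := by
      have := mem_forest he hT.2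
      exact_mod_cast this
    exact Finset.insert_erase heT
  · -- right inverse
    intro T' hT'
    rw [Finset.mem_filter] at hT'
    have hne : e ∉ T' := fun h => (mem_del (hT'.2.1 (Finset.mem_coe.mpr h))).2 rfl
    exact Finset.erase_insert hne
  · -- values
    intro T hT
    rw [Finset.mem_filter] at hT
    have heT : e ∈ T := by exact_mod_cast mem_forest he hT.2
    rw [map_prod]
    refine Finset.prod_bij' (fun f hf => ⟨(f : Sym2 V), ?_⟩)
      (fun f' _ => G.deleteEdgesInc {e} f') ?_ ?_ ?_ ?_ ?_
    · rw [Finset.mem_filter] at hf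
      rw [SimpleGraph.edgeSet_deleteEdges]
      exact ⟨f.2, fun h => hf.2 (Set.mem_singleton_iff.mp h ▸ heT)⟩
    · intro f hf
      rw [Finset.mem_filter] at hf ⊢
      refine ⟨by simp, ?_⟩
      intro hmem
      exact hf.2 (Finset.mem_erase.mp hmem).2
    · intro f' hf'
      rw [Finset.mem_filter] at hf' ⊢
      refine ⟨Finset.mem_univ _, ?_⟩
      have hne : (f' : Sym2 V) ≠ e := fun h => (mem_del f'.2).2 h
      intro hmem
      exact hf'.2 (Finset.mem_erase.mpr ⟨hne, hmem⟩)
    · intro f hf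
      rfl
    · intro f' hf'
      rfl
    · intro f hf
      rw [MvPolynomial.rename_X]
      rfl

/-- Let `e` be a bridge of `G` and `G' = G` with `e` deleted. Then
(a) every spanning forest of `G` contains `e`; (b) `Ψ_G` does not involve the variable
`x_e`, and equals the image of `Ψ_{G'}` under the renaming induced by
`E(G') = E(G) ∖ {e} ↪ E(G)`; and (c) `k^{E(G)} ∖ X̂_G ≃ k × (k^{E(G')} ∖ X̂_{G'})`. -/
theorem kirchhoff_bridge {V : Type*} [Fintype V] (G : SimpleGraph V) (e : Sym2 V)
    (he : e ∈ G.edgeSet ∧ G.IsBridge e) (k : Type*) [Field k] :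
    (∀ T : Set (Sym2 V), G.IsSpanningForest T → e ∈ T) ∧
    (⟨e, he.1⟩ : G.edgeSet) ∉ G.kirchhoff.vars ∧
    G.kirchhoff =
      MvPolynomial.rename (G.deleteEdgesInc {e}) (G.deleteEdges {e}).kirchhoff ∧
    Nonempty ((G.graphHypersurfaceComplement k) ≃
      k × ((G.deleteEdges {e}).graphHypersurfaceComplement k)) := by

  have hrename := kirchhoff_rename G e he
  have key : ∀ t : G.edgeSet → k,
      (MvPolynomial.aeval t) G.kirchhoff =
      (MvPolynomial.aeval (t ∘ G.deleteEdgesInc {e})) (G.deleteEdges {e}).kirchhoff := by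
    intro t
    rw [hrename, MvPolynomial.aeval_rename]
  refine ⟨fun T hT => mem_forest he hT, ?_, hrename, ?_⟩
  · intro hmem
    rw [hrename] at hmem
    obtain ⟨f', -, hf'⟩ := MvPolynomial.mem_vars_rename _ _ hmem
    exact (mem_del f'.2).2 (congrArg Subtype.val hf')
  · have hmemG' : ∀ f : G.edgeSet, (f : Sym2 V) ≠ e →
        (f : Sym2 V) ∈ (G.deleteEdges {e}).edgeSet := by
      intro f hf
      rw [SimpleGraph.edgeSet_deleteEdges]
      exact ⟨f.2, hf⟩
    set F : k × ((G.deleteEdges {e}).graphHypersurfaceComplement k) → G.edgeSet → k :=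
      fun p f => if h : (f : Sym2 V) = e then p.1 else p.2.1 ⟨(f : Sym2 V), hmemG' f h⟩
      with hF
    have hFcomp : ∀ p, F p ∘ G.deleteEdgesInc {e} = p.2.1 := by
      intro p
      funext f'
      have hne : ((G.deleteEdgesInc {e} f' : G.edgeSet) : Sym2 V) ≠ e :=
        fun h => (mem_del f'.2).2 h
      simp only [hF, Function.comp_apply]
      rw [dif_neg hne]
      exact congrArg p.2.1 (Subtype.ext rfl)
    have hmem1 : ∀ t : (G.graphHypersurfaceComplement k),
        (t.1 ∘ G.deleteEdgesInc {e}) ∈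
          (G.deleteEdges {e}).graphHypersurfaceComplement k := by
      intro t
      have ht := t.2
      simp only [SimpleGraph.graphHypersurfaceComplement, Set.mem_setOf_eq] at ht ⊢
      rwa [← key]
    have hmem2 : ∀ p : k × ((G.deleteEdges {e}).graphHypersurfaceComplement k),
        F p ∈ G.graphHypersurfaceComplement k := by
      intro p
      have hp := p.2.2
      simp only [SimpleGraph.graphHypersurfaceComplement, Set.mem_setOf_eq] at hp ⊢
      rw [key, hFcomp]
      exact hp
    refine ⟨⟨fun t => (t.1 ⟨e, he.1⟩, ⟨t.1 ∘ G.deleteEdgesInc {e}, hmem1 t⟩),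
             fun p => ⟨F p, hmem2 p⟩, ?_, ?_⟩⟩
    · intro t
      apply Subtype.ext
      funext f
      by_cases h : (f : Sym2 V) = e
      · show (if _ : (f : Sym2 V) = e then _ else _) = t.1 f
        rw [dif_pos h]
        exact congrArg t.1 (Subtype.ext h.symm)
      · show (if _ : (f : Sym2 V) = e then _ else _) = t.1 f
        rw [dif_neg h]
        exact congrArg t.1 (Subtype.ext rfl)
    · intro p
      refine Prod.ext ?_ (Subtype.ext ?_)
      · show (if _ : ((⟨e, he.1⟩ : G.edgeSet) : Sym2 V) = e then p.1 else _) = p.1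
        rw [dif_pos rfl]
      · exact hFcomp p
end
end

section
/- Let G be a finite simple graph on a finite vertex set V, let v ∈ V, and let G' be the graph obtained from G by attaching an edge to the vertex v: the graph on V ⊕ {∗} whose adjacency is that of G on V together with the single new edge {v, ∗}. Then Ψ_{G'} equals the image of Ψ_G under the variable renaming induced by the inclusion E(G) ↪ E(G') (in particular the new edge variable does not occur in Ψ_{G'}), and for any field k there is a bijection k^{E(G')} ∖ X̂_{G'} ≃ k × (k^{E(G)} ∖ X̂_G). (This is the property U(Γ') = [𝔸¹]·U(Γ) of the universal algebro-geometric Feynman rule.) -/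
open scoped Classical
noncomputable section

open MvPolynomial

/-- The graph obtained from `G` by attaching a new edge from `v ∈ V` to a new vertex. -/
def SimpleGraph.attachEdge {V : Type*} (G : SimpleGraph V) (v : V) :
    SimpleGraph (V ⊕ Unit) where
  Adj x y := (∃ a b, x = Sum.inl a ∧ y = Sum.inl b ∧ G.Adj a b) ∨
    (x = Sum.inl v ∧ y = Sum.inr ()) ∨ (x = Sum.inr () ∧ y = Sum.inl v)
  symm := by
    constructor
    rintro x y (⟨a, b, rfl, rfl, h⟩ | ⟨rfl, rfl⟩ | ⟨rfl, rfl⟩)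
    · exact Or.inl ⟨b, a, rfl, rfl, h.symm⟩
    · exact Or.inr (Or.inr ⟨rfl, rfl⟩)
    · exact Or.inr (Or.inl ⟨rfl, rfl⟩)
  loopless := by
    constructor
    rintro x (⟨a, b, rfl, hab, h⟩ | ⟨rfl, h⟩ | ⟨rfl, h⟩)
    · cases hab; exact (h.ne rfl).elim
    · exact absurd h (by simp)
    · exact absurd h (by simp)

lemma SimpleGraph.attachEdge_mem {V : Type*} {G : SimpleGraph V} {v : V} {e : Sym2 V}
    (he : e ∈ G.edgeSet) : e.map Sum.inl ∈ (G.attachEdge v).edgeSet := by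
  induction e using Sym2.ind with
  | _ a b => exact Or.inl ⟨a, b, rfl, rfl, he⟩

/-- The canonical inclusion `E(G) ↪ E(G')` where `G'` is `G` with an edge attached
at `v`. -/
def SimpleGraph.attachEdgeInc {V : Type*} (G : SimpleGraph V) (v : V) :
    G.edgeSet → (G.attachEdge v).edgeSet :=
  fun e => ⟨(e : Sym2 V).map Sum.inl, SimpleGraph.attachEdge_mem e.2⟩

section AttachAux

variable {V : Type*}

lemma map_inl_injective : Function.Injective (Sym2.map (Sum.inl : V → V ⊕ Unit)) :=
  Sym2.map.injective Sum.inl_injective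

lemma map_inl_ne_e0 (e : Sym2 V) (v : V) :
    Sym2.map (Sum.inl : V → V ⊕ Unit) e ≠ s(Sum.inl v, Sum.inr ()) := by
  induction e using Sym2.ind with
  | _ a b =>
    intro h
    rw [Sym2.map_pair_eq, Sym2.eq_iff] at h
    rcases h with ⟨h1, h2⟩ | ⟨h1, h2⟩ <;> simp_all

/-- Mapping a cycle along a graph hom that is injective on its support yields a cycle. -/
lemma isCycle_map_of_injOn {V' W' : Type*} {G : SimpleGraph V'} {G' : SimpleGraph W'}
    (f : G →g G') {u : V'} {p : G.Walk u u} (hp : p.IsCycle)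
    (hf : Set.InjOn f {x | x ∈ p.support}) : (p.map f).IsCycle := by
  rw [SimpleGraph.Walk.isCycle_def] at hp ⊢
  obtain ⟨ht, hne, hnd⟩ := hp
  refine ⟨?_, ?_, ?_⟩
  · rw [SimpleGraph.Walk.isTrail_def, SimpleGraph.Walk.edges_map]
    rw [SimpleGraph.Walk.isTrail_def] at ht
    refine List.Nodup.map_on ?_ ht
    intro e₁ h₁ e₂ h₂ heq
    induction e₁ using Sym2.ind with
    | _ a b =>
    induction e₂ using Sym2.ind with
    | _ c d =>
    have ha := p.fst_mem_support_of_mem_edges h₁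
    have hb := p.snd_mem_support_of_mem_edges h₁
    have hcc := p.fst_mem_support_of_mem_edges h₂
    have hd := p.snd_mem_support_of_mem_edges h₂
    rw [Sym2.map_pair_eq, Sym2.map_pair_eq, Sym2.eq_iff] at heq
    rw [Sym2.eq_iff]
    rcases heq with ⟨h1, h2⟩ | ⟨h1, h2⟩
    · exact Or.inl ⟨hf ha hcc h1, hf hb hd h2⟩
    · exact Or.inr ⟨hf ha hd h1, hf hb hcc h2⟩
  · simpa using hne
  · rw [SimpleGraph.Walk.support_map]
    have : (p.support.map f).tail = p.support.tail.map f := by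
      cases h : p.support <;> simp [h]
    rw [this]
    refine List.Nodup.map_on ?_ hnd
    intro x hx y hy hxy
    exact hf (List.mem_of_mem_tail hx) (List.mem_of_mem_tail hy) hxy

/-- A cycle cannot pass through a vertex with at most one neighbor. -/
lemma not_mem_support_of_unique_nbr {W' : Type*} {H : SimpleGraph W'} {x w : W'}
    (hx : ∀ y, H.Adj x y → y = w) {u : W'} {c : H.Walk u u} (hc : c.IsCycle) :
    x ∉ c.support := by
  intro hmem
  have hrot := hc.rotate hmem
  have h3 := hrot.three_le_length
  generalize c.rotate x hmem = q at hrot h3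
  cases q with
  | nil => exact SimpleGraph.Walk.IsCycle.not_of_nil hrot
  | @cons _ y _ h p =>
    rw [SimpleGraph.Walk.cons_isCycle_iff] at hrot
    have hy : y = w := hx y h
    have hplen : p.length ≠ 0 := by
      rw [SimpleGraph.Walk.length_cons] at h3; omega
    have hpn : ¬ p.reverse.Nil := by
      rw [SimpleGraph.Walk.nil_iff_length_eq, SimpleGraph.Walk.length_reverse]
      exact hplen
    have hadj : H.Adj x (p.reverse.getVert 1) := SimpleGraph.Walk.adj_snd hpn
    have hz : p.reverse.getVert 1 = w := hx _ hadj
    have key : ∀ (q : H.Walk x y), ¬ q.Nil → q.getVert 1 = w → s(x, w) ∈ q.edges := by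
      intro q hq hv
      cases q with
      | nil => simp at hq
      | @cons _ z _ h' q' =>
        rw [SimpleGraph.Walk.getVert_cons_succ, SimpleGraph.Walk.getVert_zero] at hv
        rw [SimpleGraph.Walk.edges_cons, ← hv]
        exact List.mem_cons_self
    have hedge := key p.reverse hpn hz
    rw [SimpleGraph.Walk.edges_reverse, List.mem_reverse] at hedge
    apply hrot.2
    rwa [← hy] at hedge

lemma acyclic_down {S : Set (Sym2 V)} {A : Set (Sym2 (V ⊕ Unit))}
    (hSA : Sym2.map Sum.inl '' S ⊆ A)
    (hA : (SimpleGraph.fromEdgeSet A).IsAcyclic) :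
    (SimpleGraph.fromEdgeSet S).IsAcyclic := by
  intro u c hc
  have hom_rel : ∀ {a b : V}, (SimpleGraph.fromEdgeSet S).Adj a b →
      (SimpleGraph.fromEdgeSet A).Adj (Sum.inl a) (Sum.inl b) := by
    intro a b hab
    rw [SimpleGraph.fromEdgeSet_adj] at hab ⊢
    refine ⟨hSA ⟨s(a, b), hab.1, Sym2.map_pair_eq _ _ _⟩, fun hh => hab.2 (Sum.inl_injective hh)⟩
  let f : SimpleGraph.fromEdgeSet S →g SimpleGraph.fromEdgeSet A := ⟨Sum.inl, hom_rel⟩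
  exact hA (c.map f) (hc.map (f := f) Sum.inl_injective)

lemma acyclic_up {S : Set (Sym2 V)} (v : V)
    (hS : (SimpleGraph.fromEdgeSet S).IsAcyclic) :
    (SimpleGraph.fromEdgeSet
      (Sym2.map Sum.inl '' S ∪ {s(Sum.inl v, Sum.inr ())} : Set (Sym2 (V ⊕ Unit)))).IsAcyclic := by
  intro u c hc
  have hnbr : ∀ y, (SimpleGraph.fromEdgeSet
      (Sym2.map Sum.inl '' S ∪ {s(Sum.inl v, Sum.inr ())} : Set (Sym2 (V ⊕ Unit)))).Adj
      (Sum.inr ()) y → y = Sum.inl v := by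
    intro y hy
    rw [SimpleGraph.fromEdgeSet_adj] at hy
    rcases hy.1 with hmem | hmem
    · obtain ⟨e, _, heq⟩ := hmem
      exfalso
      induction e using Sym2.ind with
      | _ a b =>
        rw [Sym2.map_pair_eq, Sym2.eq_iff] at heq
        rcases heq with ⟨h1, _⟩ | ⟨_, h2⟩ <;> simp_all
    · rw [Set.mem_singleton_iff, Sym2.eq_iff] at hmem
      rcases hmem with ⟨h1, _⟩ | ⟨_, h2⟩ <;> simp_all
  have hxns : Sum.inr () ∉ c.support := not_mem_support_of_unique_nbr hnbr hc
  have hedges : ∀ e ∈ c.edges,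
      e ∈ (SimpleGraph.fromEdgeSet (Sym2.map Sum.inl '' S : Set (Sym2 (V ⊕ Unit)))).edgeSet := by
    intro e he
    have he' := c.edges_subset_edgeSet he
    rw [SimpleGraph.edgeSet_fromEdgeSet] at he' ⊢
    refine ⟨?_, he'.2⟩
    rcases he'.1 with h | h
    · exact h
    · exfalso
      rw [Set.mem_singleton_iff] at h
      subst h
      exact hxns (c.snd_mem_support_of_mem_edges he)
  have hc' := hc.transfer hedges
  have hsupp : Sum.inr () ∉ (c.transfer _ hedges).support := by
    rwa [SimpleGraph.Walk.support_transfer]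
  have hom_rel : ∀ {x y : V ⊕ Unit},
      (SimpleGraph.fromEdgeSet (Sym2.map Sum.inl '' S : Set (Sym2 (V ⊕ Unit)))).Adj x y →
      (SimpleGraph.fromEdgeSet S).Adj (Sum.elim id (fun _ => v) x) (Sum.elim id (fun _ => v) y) := by
    intro x y hxy
    rw [SimpleGraph.fromEdgeSet_adj] at hxy
    obtain ⟨⟨e, he, heq⟩, hne⟩ := hxy
    induction e using Sym2.ind with
    | _ a b =>
      rw [Sym2.map_pair_eq, Sym2.eq_iff] at heq
      rw [SimpleGraph.fromEdgeSet_adj]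
      rcases heq with ⟨h1, h2⟩ | ⟨h1, h2⟩
      · subst h1; subst h2
        exact ⟨he, fun hh => hne (by simp only [Sum.elim_inl, id_eq] at hh; rw [hh])⟩
      · subst h1; subst h2
        refine ⟨by rwa [Sym2.eq_swap], fun hh => hne (by simp only [Sum.elim_inl, id_eq] at hh; rw [hh])⟩
  let r : SimpleGraph.fromEdgeSet (Sym2.map Sum.inl '' S : Set (Sym2 (V ⊕ Unit))) →g
      SimpleGraph.fromEdgeSet S := ⟨Sum.elim id (fun _ => v), hom_rel⟩
  have hinj : Set.InjOn r {x | x ∈ (c.transfer _ hedges).support} := by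
    intro x hx y hy hxy
    cases x with
    | inl a =>
      cases y with
      | inl b => simpa [r] using hxy
      | inr u' => cases u'; exact absurd hy hsupp
    | inr u' => cases u'; exact absurd hx hsupp
  exact hS ((c.transfer _ hedges).map r) (isCycle_map_of_injOn r hc' hinj)

end AttachAux

section ForestAux

variable {V : Type*} {G : SimpleGraph V} {v : V}

lemma mem_attachEdge_edgeSet_iff (e : Sym2 (V ⊕ Unit)) :
    e ∈ (G.attachEdge v).edgeSet ↔
      (∃ f ∈ G.edgeSet, Sym2.map Sum.inl f = e) ∨ e = s(Sum.inl v, Sum.inr ()) := by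
  induction e using Sym2.ind with
  | _ x y =>
    rw [SimpleGraph.mem_edgeSet]
    constructor
    · rintro (⟨a, b, rfl, rfl, h⟩ | ⟨rfl, rfl⟩ | ⟨rfl, rfl⟩)
      · exact Or.inl ⟨s(a, b), h, Sym2.map_pair_eq _ _ _⟩
      · exact Or.inr rfl
      · exact Or.inr Sym2.eq_swap
    · rintro (⟨f, hf, hmap⟩ | heq)
      · induction f using Sym2.ind with
        | _ a b =>
          rw [SimpleGraph.mem_edgeSet] at hf
          rw [Sym2.map_pair_eq, Sym2.eq_iff] at hmap
          rcases hmap with ⟨rfl, rfl⟩ | ⟨rfl, rfl⟩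
          · exact Or.inl ⟨a, b, rfl, rfl, hf⟩
          · exact Or.inl ⟨b, a, rfl, rfl, hf.symm⟩
      · rw [Sym2.eq_iff] at heq
        rcases heq with ⟨rfl, rfl⟩ | ⟨rfl, rfl⟩
        · exact Or.inr (Or.inl ⟨rfl, rfl⟩)
        · exact Or.inr (Or.inr ⟨rfl, rfl⟩)

lemma map_inl_mem_attachEdge_iff (f : Sym2 V) :
    Sym2.map Sum.inl f ∈ (G.attachEdge v).edgeSet ↔ f ∈ G.edgeSet := by
  constructor
  · intro h
    rcases (mem_attachEdge_edgeSet_iff _).1 h with ⟨f', hf', heq⟩ | heq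
    · rwa [← map_inl_injective heq]
    · exact absurd heq (map_inl_ne_e0 f v)
  · exact fun h => SimpleGraph.attachEdge_mem h

lemma union_subset_attachEdge_edgeSet {S : Set (Sym2 V)} (hS : S ⊆ G.edgeSet) :
    Sym2.map Sum.inl '' S ∪ {s(Sum.inl v, Sum.inr ())} ⊆ (G.attachEdge v).edgeSet := by
  rintro e (⟨f, hf, rfl⟩ | rfl)
  · exact SimpleGraph.attachEdge_mem (hS hf)
  · exact ((G.attachEdge v).mem_edgeSet).mpr (Or.inr (Or.inl ⟨rfl, rfl⟩))

lemma attachEdge_subset_decomp {X : Set (Sym2 (V ⊕ Unit))}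
    (hX : X ⊆ (G.attachEdge v).edgeSet) (h0 : s(Sum.inl v, Sum.inr ()) ∈ X) :
    X = Sym2.map Sum.inl '' (Sym2.map Sum.inl ⁻¹' X) ∪ {s(Sum.inl v, Sum.inr ())} := by
  apply Set.Subset.antisymm
  · intro e he
    rcases (mem_attachEdge_edgeSet_iff e).1 (hX he) with ⟨f, _, rfl⟩ | rfl
    · exact Or.inl ⟨f, he, rfl⟩
    · exact Or.inr rfl
  · rintro e (⟨f, hf, rfl⟩ | rfl)
    · exact hf
    · exact h0

lemma isSpanningForest_attachEdge_iff (T' : Set (Sym2 (V ⊕ Unit))) :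
    (G.attachEdge v).IsSpanningForest T' ↔
      ∃ T : Set (Sym2 V), G.IsSpanningForest T ∧
        T' = Sym2.map Sum.inl '' T ∪ {s(Sum.inl v, Sum.inr ())} := by
  constructor
  · rintro ⟨hsub, hac, hmax⟩
    set T : Set (Sym2 V) := Sym2.map Sum.inl ⁻¹' T' with hTdef
    have hTsub : T ⊆ G.edgeSet := fun f hf => (map_inl_mem_attachEdge_iff f).1 (hsub hf)
    have himg : Sym2.map Sum.inl '' T ⊆ T' := Set.image_preimage_subset _ _
    have hTac : (SimpleGraph.fromEdgeSet T).IsAcyclic := acyclic_down himg hac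
    have he0 : s(Sum.inl v, Sum.inr ()) ∈ T' := by
      by_contra h0
      have hbig : T' ⊆ Sym2.map Sum.inl '' T ∪ {s(Sum.inl v, Sum.inr ())} := by
        intro e he
        rcases (mem_attachEdge_edgeSet_iff e).1 (hsub he) with ⟨f, _, rfl⟩ | rfl
        · exact Or.inl ⟨f, he, rfl⟩
        · exact Or.inr rfl
      have heq := hmax _ hbig (union_subset_attachEdge_edgeSet hTsub) (acyclic_up v hTac)
      exact h0 (heq ▸ Or.inr rfl)
    have hT'eq := attachEdge_subset_decomp hsub he0
    refine ⟨T, ⟨hTsub, hTac, ?_⟩, hT'eq⟩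
    intro S hTS hSsub hSac
    have hbig : T' ⊆ Sym2.map Sum.inl '' S ∪ {s(Sum.inl v, Sum.inr ())} := by
      rw [hT'eq]
      exact Set.union_subset_union_left _ (Set.image_mono hTS)
    have heq := hmax _ hbig (union_subset_attachEdge_edgeSet hSsub) (acyclic_up v hSac)
    apply Set.Subset.antisymm _ hTS
    intro f hf
    have : Sym2.map Sum.inl f ∈ T' := heq ▸ Or.inl ⟨f, hf, rfl⟩
    exact this
  · rintro ⟨T, ⟨hTsub, hTac, hTmax⟩, rfl⟩
    refine ⟨union_subset_attachEdge_edgeSet hTsub, acyclic_up v hTac, ?_⟩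
    intro S' hsub' hS'sub hS'ac
    set S : Set (Sym2 V) := Sym2.map Sum.inl ⁻¹' S' with hSdef
    have hSsub : S ⊆ G.edgeSet := fun f hf => (map_inl_mem_attachEdge_iff f).1 (hS'sub hf)
    have hTS : T ⊆ S := fun f hf => hsub' (Or.inl ⟨f, hf, rfl⟩)
    have he0 : s(Sum.inl v, Sum.inr ()) ∈ S' := hsub' (Or.inr rfl)
    have hS'eq := attachEdge_subset_decomp hS'sub he0
    have hSac : (SimpleGraph.fromEdgeSet S).IsAcyclic :=
      acyclic_down (Set.image_preimage_subset _ _) hS'ac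
    have hST := hTmax S hTS hSsub hSac
    rw [hS'eq, ← hSdef, hST]

end ForestAux

/-- see docstring in problem -/
theorem kirchhoff_attachEdge {V : Type*} [Fintype V] (G : SimpleGraph V) (v : V)
    (k : Type*) [Field k] :
    (G.attachEdge v).kirchhoff = MvPolynomial.rename (G.attachEdgeInc v) G.kirchhoff ∧
    (⟨s(Sum.inl v, Sum.inr ()),
        ((G.attachEdge v).mem_edgeSet).mpr (Or.inr (Or.inl ⟨rfl, rfl⟩))⟩ :
      (G.attachEdge v).edgeSet) ∉ (G.attachEdge v).kirchhoff.vars ∧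
    Nonempty (((G.attachEdge v).graphHypersurfaceComplement k) ≃
      k × (G.graphHypersurfaceComplement k)) := by
  classical
  have he₀ : s(Sum.inl v, Sum.inr ()) ∈ (G.attachEdge v).edgeSet :=
    ((G.attachEdge v).mem_edgeSet).mpr (Or.inr (Or.inl ⟨rfl, rfl⟩))
  have hren : (G.attachEdge v).kirchhoff =
      MvPolynomial.rename (G.attachEdgeInc v) G.kirchhoff := by
    rw [SimpleGraph.kirchhoff, SimpleGraph.kirchhoff, map_sum]
    refine (Finset.sum_nbij'
      (i := fun T : Finset (Sym2 V) =>
        T.image (Sym2.map Sum.inl) ∪ {s(Sum.inl v, Sum.inr ())})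
      (j := fun T' : Finset (Sym2 (V ⊕ Unit)) =>
        T'.preimage (Sym2.map Sum.inl) map_inl_injective.injOn)
      ?_ ?_ ?_ ?_ ?_).symm
    · intro T hT
      rw [Finset.mem_filter] at hT ⊢
      refine ⟨Finset.mem_univ _, ?_⟩
      rw [isSpanningForest_attachEdge_iff]
      exact ⟨↑T, hT.2, by simp⟩
    · intro T' hT'
      rw [Finset.mem_filter] at hT' ⊢
      obtain ⟨T₀, hT₀, hEq⟩ := (isSpanningForest_attachEdge_iff _).1 hT'.2
      refine ⟨Finset.mem_univ _, ?_⟩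
      have hco : ((T'.preimage (Sym2.map Sum.inl) map_inl_injective.injOn : Finset _) :
          Set (Sym2 V)) = T₀ := by
        rw [Finset.coe_preimage, hEq, Set.preimage_union,
          Set.preimage_image_eq _ map_inl_injective]
        have hempty : Sym2.map (Sum.inl : V → V ⊕ Unit) ⁻¹'
            ({s(Sum.inl v, Sum.inr ())} : Set (Sym2 (V ⊕ Unit))) = ∅ := by
          ext f
          simp [map_inl_ne_e0 f v]
        rw [hempty, Set.union_empty]
      rw [hco]
      exact hT₀
    · intro T _
      ext e
      simp [Finset.mem_preimage, map_inl_ne_e0 e v, map_inl_injective.eq_iff]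
    · intro T' hT'
      rw [Finset.mem_filter] at hT'
      obtain ⟨T₀, _, hEq⟩ := (isSpanningForest_attachEdge_iff _).1 hT'.2
      ext e
      constructor
      · intro he
        rcases Finset.mem_union.1 he with h | h
        · obtain ⟨f, hf, rfl⟩ := Finset.mem_image.1 h
          exact Finset.mem_preimage.1 hf
        · rw [Finset.mem_singleton] at h
          subst h
          have : s(Sum.inl v, Sum.inr ()) ∈ (↑T' : Set (Sym2 (V ⊕ Unit))) := by
            rw [hEq]; exact Or.inr rfl
          exact this
      · intro he
        have hmem : e ∈ (↑T' : Set (Sym2 (V ⊕ Unit))) := he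
        rw [hEq] at hmem
        rcases hmem with ⟨f, hf, rfl⟩ | h
        · exact Finset.mem_union_left _
            (Finset.mem_image.2 ⟨f, Finset.mem_preimage.2 he, rfl⟩)
        · exact Finset.mem_union_right _ (Finset.mem_singleton.2 h)
    · intro T hT
      rw [map_prod]
      simp_rw [rename_X]
      refine Finset.prod_bij (fun e _ => G.attachEdgeInc v e) ?_ ?_ ?_ ?_
      · intro e he
        simp only [Finset.mem_filter] at he ⊢
        refine ⟨Finset.mem_univ _, ?_⟩
        intro hmem
        rcases Finset.mem_union.1 hmem with h | h
        · obtain ⟨f, hf, heq⟩ := Finset.mem_image.1 h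
          exact he.2 (map_inl_injective heq ▸ hf)
        · exact map_inl_ne_e0 e.val v (Finset.mem_singleton.1 h)
      · intro e₁ _ e₂ _ h
        exact Subtype.ext (map_inl_injective (congrArg Subtype.val h))
      · intro b hb
        simp only [Finset.mem_filter] at hb
        rcases (mem_attachEdge_edgeSet_iff b.val).1 b.2 with ⟨f, hf, heq⟩ | heq
        · refine ⟨⟨f, hf⟩, ?_, Subtype.ext heq⟩
          simp only [Finset.mem_filter]
          refine ⟨Finset.mem_univ _, ?_⟩
          intro hfT
          exact hb.2 (Finset.mem_union_left _ (Finset.mem_image.2 ⟨f, hfT, heq⟩))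
        · exact absurd (Finset.mem_union_right _ (Finset.mem_singleton.2 heq)) hb.2
      · intro e _
        rfl
  have hvars : (⟨s(Sum.inl v, Sum.inr ()), he₀⟩ : (G.attachEdge v).edgeSet) ∉
      (G.attachEdge v).kirchhoff.vars := by
    intro hmem
    rw [hren] at hmem
    have hsub := MvPolynomial.vars_rename (G.attachEdgeInc v) G.kirchhoff hmem
    obtain ⟨e, _, heq⟩ := Finset.mem_image.1 hsub
    exact map_inl_ne_e0 e.val v (congrArg Subtype.val heq)
  have hbij : Function.Bijective (Sum.elim
      (fun _ : Unit => (⟨s(Sum.inl v, Sum.inr ()), he₀⟩ : (G.attachEdge v).edgeSet))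
      (G.attachEdgeInc v)) := by
    constructor
    · rintro (u₁ | e₁) (u₂ | e₂) h
      · cases u₁; cases u₂; rfl
      · exact absurd (congrArg Subtype.val h) (Ne.symm (map_inl_ne_e0 e₂.val v))
      · exact absurd (congrArg Subtype.val h) (map_inl_ne_e0 e₁.val v)
      · exact congrArg Sum.inr (Subtype.ext (map_inl_injective (congrArg Subtype.val h)))
    · rintro ⟨e, he⟩
      rcases (mem_attachEdge_edgeSet_iff e).1 he with ⟨f, hf, rfl⟩ | rfl
      · exact ⟨Sum.inr ⟨f, hf⟩, rfl⟩
      · exact ⟨Sum.inl (), rfl⟩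
  set σ : (Unit ⊕ G.edgeSet) ≃ (G.attachEdge v).edgeSet := Equiv.ofBijective _ hbij with hσ
  have heval : ∀ t : (G.attachEdge v).edgeSet → k,
      MvPolynomial.aeval t (G.attachEdge v).kirchhoff =
        MvPolynomial.aeval (t ∘ G.attachEdgeInc v) G.kirchhoff := fun t => by
    rw [hren, MvPolynomial.aeval_rename]
  refine ⟨hren, hvars, ⟨?_⟩⟩
  refine
    { toFun := fun t => ⟨t.1 ⟨s(Sum.inl v, Sum.inr ()), he₀⟩,
        ⟨fun e => t.1 (G.attachEdgeInc v e), fun h => t.2 (by rw [heval t.1]; exact h)⟩⟩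
      invFun := fun p => ⟨fun e' => Sum.elim (fun _ => p.1) p.2.1 (σ.symm e'), ?_⟩
      left_inv := ?_
      right_inv := ?_ }
  · show MvPolynomial.aeval (fun e' => Sum.elim (fun _ => p.1) p.2.1 (σ.symm e'))
        (G.attachEdge v).kirchhoff ≠ 0
    rw [heval]
    have hfun : (fun e' => Sum.elim (fun _ => p.1) p.2.1 (σ.symm e')) ∘ G.attachEdgeInc v
        = p.2.1 := by
      funext e
      have h2 : σ.symm (G.attachEdgeInc v e) = Sum.inr e := by
        rw [Equiv.symm_apply_eq]; rfl
      show Sum.elim (fun _ => p.1) p.2.1 (σ.symm (G.attachEdgeInc v e)) = p.2.1 e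
      rw [h2]
      rfl
    rw [hfun]
    exact p.2.2
  · intro t
    apply Subtype.ext
    funext e'
    show Sum.elim _ _ (σ.symm e') = t.1 e'
    obtain ⟨x, rfl⟩ := σ.surjective e'
    rw [Equiv.symm_apply_apply]
    cases x with
    | inl u => cases u; rfl
    | inr e => rfl
  · intro p
    refine Prod.ext ?_ ?_
    · show Sum.elim (fun _ => p.1) p.2.1 (σ.symm ⟨s(Sum.inl v, Sum.inr ()), he₀⟩) = p.1
      have h1 : σ.symm ⟨s(Sum.inl v, Sum.inr ()), he₀⟩ = Sum.inl () := by
        rw [Equiv.symm_apply_eq]; rfl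
      rw [h1]
      rfl
    · apply Subtype.ext
      funext e
      show Sum.elim (fun _ => p.1) p.2.1 (σ.symm (G.attachEdgeInc v e)) = p.2.1 e
      have h2 : σ.symm (G.attachEdgeInc v e) = Sum.inr e := by
        rw [Equiv.symm_apply_eq]; rfl
      rw [h2]
      rfl
end
end
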